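/- arXiv:1406.4012 — 9 statements merged into one kernel-verified Lean document; each statement's English description precedes it below -/
import Mathlib

section
/- Let M_1, M_2, ..., M_k (k ≥ 2) be closed linear subspaces of a real Hilbert space X and let M := ⋂_{l=1}^k M_l. Then for every x ∈ X, the iterates of cyclic alternating projections converge strongly to the projection of x onto M: lim_{n→∞} ‖(P_{M_k} P_{M_{k-1}} ··· P_{M_1})^n x − P_M x‖ = 0. -/
open Filter

section Aux
variable {X : Type*} [NormedAddCommGroup X] [InnerProductSpace ℝ X]

lemma convex_norm_sq_id (t : ℝ) (a b : X) :
    ‖(1-t) • a + t • b‖^2 = (1-t)*‖a‖^2 + t*‖b‖^2 - t*(1-t)*‖a-b‖^2 := by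
  have h : ∀ v : X, ‖v‖^2 = inner ℝ v v := fun v => (real_inner_self_eq_norm_sq v).symm
  simp only [h, inner_add_left, inner_add_right, inner_sub_left, inner_sub_right,
    real_inner_smul_left, real_inner_smul_right]
  rw [real_inner_comm b a]; ring

variable [CompleteSpace X] {k : ℕ} (M : Fin k → Submodule ℝ X) [∀ l, CompleteSpace (M l)]

set_option linter.unusedSectionVars false

/-- the projections as continuous linear maps on `X` -/
noncomputable def PP (l : Fin k) : X →L[ℝ] X :=
  (M l).subtypeL.comp (Submodule.orthogonalProjectionOnto (M l))

lemma PP_apply (l : Fin k) (z : X) : PP M l z = (Submodule.orthogonalProjectionOnto (M l) z : X) := rfl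

lemma PP_mem (l : Fin k) (z : X) : PP M l z ∈ M l := SetLike.coe_mem ((M l).orthogonalProjectionOnto z)

lemma PP_pyth (l : Fin k) (z : X) : ‖z‖^2 = ‖PP M l z‖^2 + ‖z - PP M l z‖^2 := by
  have h0 : (inner ℝ (z - PP M l z) (PP M l z) : ℝ) = 0 :=
    Submodule.starProjection_inner_eq_zero z _ (PP_mem M l z)
  have hz : z = PP M l z + (z - PP M l z) := by abel
  calc ‖z‖^2 = ‖PP M l z + (z - PP M l z)‖^2 := by rw [← hz]
    _ = ‖PP M l z‖^2 + 2*(inner ℝ (PP M l z) (z - PP M l z) : ℝ) + ‖z - PP M l z‖^2 :=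
        norm_add_sq_real _ _
    _ = ‖PP M l z‖^2 + ‖z - PP M l z‖^2 := by rw [real_inner_comm, h0]; ring

lemma PP_norm_le (l : Fin k) (z : X) : ‖PP M l z‖ ≤ ‖z‖ := by
  have h := PP_pyth M l z
  have h2 : ‖PP M l z‖^2 ≤ ‖z‖^2 := by nlinarith [sq_nonneg ‖z - PP M l z‖]
  exact (pow_le_pow_iff_left₀ (norm_nonneg _) (norm_nonneg _) two_ne_zero).mp h2

lemma PP_norm_eq (l : Fin k) (z : X) (h : ‖PP M l z‖ = ‖z‖) : PP M l z = z := by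
  have h1 := PP_pyth M l z
  have : ‖z - PP M l z‖^2 = 0 := by rw [h] at h1; linarith
  have : ‖z - PP M l z‖ = 0 := by nlinarith [norm_nonneg (z - PP M l z)]
  have := norm_eq_zero.mp this
  have : z = PP M l z := by linear_combination (norm := abel) this
  exact this.symm

lemma PP_of_mem (l : Fin k) (z : X) (h : z ∈ M l) : PP M l z = z :=
  Submodule.starProjection_eq_self_iff.mpr h

lemma PP_reflect_norm (l : Fin k) (z : X) : ‖(2:ℝ) • PP M l z - z‖ = ‖z‖ := by
  have h0 : (inner ℝ (z - PP M l z) (PP M l z) : ℝ) = 0 :=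
    Submodule.starProjection_inner_eq_zero z _ (PP_mem M l z)
  have h1 : (2:ℝ) • PP M l z - z = PP M l z - (z - PP M l z) := by
    rw [two_smul]; abel
  have h2 : ‖PP M l z - (z - PP M l z)‖^2 = ‖z‖^2 := by
    rw [norm_sub_sq_real, real_inner_comm, h0, PP_pyth M l z]; ring
  rw [h1]
  exact le_antisymm
    ((pow_le_pow_iff_left₀ (norm_nonneg _) (norm_nonneg _) two_ne_zero).mp h2.le)
    ((pow_le_pow_iff_left₀ (norm_nonneg _) (norm_nonneg _) two_ne_zero).mp h2.ge)


/-- composition of the projections along a list, as a CLM -/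
noncomputable def TL (L : List (Fin k)) : X →L[ℝ] X :=
  L.foldl (fun A l => (PP M l).comp A) 1

lemma TL_nil : TL M ([] : List (Fin k)) = 1 := rfl

lemma TL_foldl_comp : ∀ (L : List (Fin k)) (A : X →L[ℝ] X),
    L.foldl (fun A l => (PP M l).comp A) A = (TL M L).comp A := by
  intro L
  induction L with
  | nil => intro A; ext y; rfl
  | cons l L ih =>
    intro A
    show L.foldl _ ((PP M l).comp A) = _
    rw [ih ((PP M l).comp A)]
    have : TL M (l :: L) = (TL M L).comp (PP M l) := by
      show List.foldl _ _ _ = _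
      rw [List.foldl_cons, ih ((PP M l).comp 1)]
      ext y; rfl
    rw [this]
    rfl

lemma TL_cons (l : Fin k) (L : List (Fin k)) :
    TL M (l :: L) = (TL M L).comp (PP M l) := by
  show List.foldl _ _ _ = _
  rw [List.foldl_cons, TL_foldl_comp]
  ext y; rfl

lemma TL_apply_foldl : ∀ (L : List (Fin k)) (y : X),
    TL M L y = L.foldl (fun z l => (Submodule.orthogonalProjectionOnto (M l) z : X)) y := by
  intro L
  induction L with
  | nil => intro y; rfl
  | cons l L ih =>
    intro y
    rw [TL_cons, List.foldl_cons]
    exact ih (PP M l y)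

lemma TL_norm_le : ∀ (L : List (Fin k)) (z : X), ‖TL M L z‖ ≤ ‖z‖ := by
  intro L
  induction L with
  | nil => intro z; simp [TL_nil]
  | cons l L ih =>
    intro z
    rw [TL_cons]
    exact (ih (PP M l z)).trans (PP_norm_le M l z)

lemma TL_norm_eq : ∀ (L : List (Fin k)) (z : X), ‖TL M L z‖ = ‖z‖ →
    TL M L z = z ∧ ∀ l ∈ L, z ∈ M l := by
  intro L
  induction L with
  | nil => intro z _; exact ⟨by simp [TL_nil], by simp⟩
  | cons l L ih =>
    intro z h
    rw [TL_cons] at h ⊢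
    have h1 : ‖PP M l z‖ = ‖z‖ := by
      refine le_antisymm (PP_norm_le M l z) ?_
      calc ‖z‖ = ‖TL M L (PP M l z)‖ := h.symm
        _ ≤ ‖PP M l z‖ := TL_norm_le M L _
    have h2 : PP M l z = z := PP_norm_eq M l z h1
    rw [ContinuousLinearMap.comp_apply, h2] at h ⊢
    obtain ⟨hfix, hmem⟩ := ih z h
    refine ⟨hfix, ?_⟩
    intro l' hl'
    rcases List.mem_cons.mp hl' with h' | h'
    · subst h'; have := PP_mem M l' z; rwa [h2] at this
    · exact hmem l' h'

lemma TL_fix_of_mem : ∀ (L : List (Fin k)) (z : X), (∀ l ∈ L, z ∈ M l) → TL M L z = z := by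
  intro L
  induction L with
  | nil => intro z _; simp [TL_nil]
  | cons l L ih =>
    intro z h
    rw [TL_cons, ContinuousLinearMap.comp_apply,
      PP_of_mem M l z (h l (List.mem_cons_self))]
    exact ih z fun l' hl' => h l' (List.mem_cons_of_mem l hl')

/-- averaged decomposition: `TL L = (1/2)^|L| • 1 + (1-(1/2)^|L|) • N` with `N` a contraction -/
lemma TL_averaged : ∀ (L : List (Fin k)), ∃ N : X →L[ℝ] X, (∀ y, ‖N y‖ ≤ ‖y‖) ∧
    TL M L = ((1/2:ℝ)^L.length) • (1 : X →L[ℝ] X) + (1 - (1/2:ℝ)^L.length) • N := by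
  intro L
  induction L with
  | nil => exact ⟨0, fun y => by simp, by simp [TL_nil]⟩
  | cons l L ih =>
    obtain ⟨N, hN, hdec⟩ := ih
    set c : ℝ := (1/2:ℝ)^L.length with hc
    have hc0 : 0 < c := by positivity
    have hc1 : c ≤ 1 := by
      rw [hc]; exact pow_le_one₀ (by norm_num) (by norm_num)
    set R : X →L[ℝ] X := (2:ℝ) • PP M l - 1 with hR
    have hRnorm : ∀ y, ‖R y‖ = ‖y‖ := by
      intro y
      have : R y = (2:ℝ) • PP M l y - y := rfl
      rw [this]
      exact PP_reflect_norm M l y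
    have hPdec : PP M l = (1/2:ℝ) • (1 : X →L[ℝ] X) + (1/2:ℝ) • R := by
      ext y
      simp [hR]
      module
    set c' : ℝ := (1/2:ℝ)^(l :: L).length with hc'
    have hcc : c' = c/2 := by
      rw [hc', hc, List.length_cons, pow_succ]; ring
    have hden : 1 - c' > 0 := by rw [hcc]; linarith
    set N' : X →L[ℝ] X := (1 - c')⁻¹ • ((c/2) • R + ((1-c)/2) • N + ((1-c)/2) • (N.comp R))
      with hN'
    refine ⟨N', ?_, ?_⟩
    · intro y
      have h1 : ‖((c/2) • R + ((1-c)/2) • N + ((1-c)/2) • (N.comp R)) y‖ ≤ (1 - c') * ‖y‖ := by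
        have e1 : ‖(c/2) • R y‖ = (c/2) * ‖y‖ := by
          rw [norm_smul, Real.norm_eq_abs, abs_of_pos (by linarith), hRnorm]
        have e2 : ‖((1-c)/2) • N y‖ ≤ ((1-c)/2) * ‖y‖ := by
          rw [norm_smul, Real.norm_eq_abs, abs_of_nonneg (by linarith)]
          have := hN y
          nlinarith
        have e3 : ‖((1-c)/2) • (N (R y))‖ ≤ ((1-c)/2) * ‖y‖ := by
          rw [norm_smul, Real.norm_eq_abs, abs_of_nonneg (by linarith)]
          have := (hN (R y)).trans_eq (hRnorm y)
          nlinarith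
        calc ‖((c/2) • R + ((1-c)/2) • N + ((1-c)/2) • (N.comp R)) y‖
            ≤ ‖(c/2) • R y‖ + ‖((1-c)/2) • N y‖ + ‖((1-c)/2) • (N (R y))‖ := by
              simp only [ContinuousLinearMap.add_apply, ContinuousLinearMap.smul_apply,
                ContinuousLinearMap.comp_apply]
              exact (norm_add_le _ _).trans (by gcongr; exact norm_add_le _ _)
          _ ≤ (c/2) * ‖y‖ + ((1-c)/2) * ‖y‖ + ((1-c)/2) * ‖y‖ := by
              rw [e1]; gcongr
          _ = (1 - c') * ‖y‖ := by rw [hcc]; ring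
      rw [hN']
      calc ‖((1 - c')⁻¹ • ((c/2) • R + ((1-c)/2) • N + ((1-c)/2) • (N.comp R))) y‖
          = (1 - c')⁻¹ * ‖((c/2) • R + ((1-c)/2) • N + ((1-c)/2) • (N.comp R)) y‖ := by
            rw [ContinuousLinearMap.smul_apply, norm_smul, Real.norm_eq_abs,
              abs_of_pos (by positivity)]
        _ ≤ (1 - c')⁻¹ * ((1 - c') * ‖y‖) := by gcongr
        _ = ‖y‖ := by field_simp
    · have hne : (1 : ℝ) - c' ≠ 0 := ne_of_gt hden
      ext y
      have e0 : PP M l y = (1/2:ℝ) • y + (1/2:ℝ) • R y := by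
        have : R y = (2:ℝ) • PP M l y - y := rfl
        rw [this]; module
      have eL : TL M (l :: L) y = TL M L (PP M l y) := by rw [TL_cons]; rfl
      have eN' : (1 - c') • N' y = (c/2) • R y + ((1-c)/2) • N y + ((1-c)/2) • N (R y) := by
        have : N' y = (1 - c')⁻¹ • (((c/2) • R + ((1-c)/2) • N + ((1-c)/2) • (N.comp R)) y) := rfl
        rw [this, smul_inv_smul₀ hne]
        simp [ContinuousLinearMap.add_apply, ContinuousLinearMap.smul_apply,
          ContinuousLinearMap.comp_apply]
      have eR : (c' • (1 : X →L[ℝ] X) + (1 - c') • N') y = c' • y + (1 - c') • N' y := by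
        simp [ContinuousLinearMap.add_apply, ContinuousLinearMap.smul_apply]
      rw [eL, eR, eN', e0, hdec, hcc]
      simp only [ContinuousLinearMap.add_apply, ContinuousLinearMap.smul_apply,
        ContinuousLinearMap.one_apply, map_add, map_smul]
      module

end Aux

/-- von Neumann–Halperin: for closed linear subspaces
`M 0, …, M (k-1)` (`k ≥ 2`) of a real Hilbert space `X` with intersection
`⨅ l, M l`, the iterates of cyclic alternating projections converge strongly
to the orthogonal projection onto the intersection:
`‖(P_{M_{k-1}} ∘ ⋯ ∘ P_{M_0})^[n] x - P_{⨅ l, M l} x‖ → 0`. -/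
theorem alternating_projections_strong_convergence
    {X : Type*} [NormedAddCommGroup X] [InnerProductSpace ℝ X] [CompleteSpace X]
    {k : ℕ} (hk : 2 ≤ k) (M : Fin k → Submodule ℝ X)
    [∀ l, CompleteSpace (M l)] [CompleteSpace (⨅ l, M l : Submodule ℝ X)]
    (x : X) :
    Tendsto
      (fun n : ℕ =>
        ‖(fun y : X =>
            (List.finRange k).foldl
              (fun z l => (Submodule.orthogonalProjectionOnto (M l) z : X)) y)^[n] x -
          (Submodule.orthogonalProjectionOnto (⨅ l, M l : Submodule ℝ X) x : X)‖)
      atTop (nhds 0) := by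
  classical
  set L : List (Fin k) := List.finRange k with hL
  set T : X →L[ℝ] X := TL M L with hT
  obtain ⟨N, hN, hdec⟩ := TL_averaged M L
  set c : ℝ := (1/2 : ℝ)^L.length with hc
  have hc0 : 0 < c := by positivity
  have hLlen : L.length = k := List.length_finRange
  have hc1 : c < 1 := by
    rw [hc, hLlen]
    exact pow_lt_one₀ (by norm_num) (by norm_num) (by omega)
  have hcc0 : 0 < c * (1 - c) := mul_pos hc0 (by linarith)
  -- pointwise decomposition
  have hTpt : ∀ y : X, T y = c • y + (1-c) • N y := by
    intro y
    rw [hT, hdec]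
    simp [ContinuousLinearMap.add_apply, ContinuousLinearMap.smul_apply]
  -- key inequality
  have hkey : ∀ y : X, ‖T y‖^2 ≤ ‖y‖^2 - c*(1-c)*‖y - N y‖^2 := by
    intro y
    have hid := convex_norm_sq_id (1-c) y (N y)
    have hcs : (1:ℝ) - (1-c) = c := by ring
    rw [hcs] at hid
    rw [hTpt y, hid]
    have h1 : ‖N y‖^2 ≤ ‖y‖^2 :=
      (pow_le_pow_left₀ (norm_nonneg _) (hN y) 2)
    nlinarith
  have hTle : ∀ y : X, ‖T y‖ ≤ ‖y‖ := TL_norm_le M L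
  -- commutation
  have hcomm : ∀ y : X, N (T y) = T (N y) := by
    intro y
    rw [hTpt y, hTpt (N y), map_add, map_smul, map_smul]
  -- iterate lemmas
  have hiter_succ : ∀ (y : X) (n : ℕ), (⇑T)^[n+1] y = T ((⇑T)^[n] y) := by
    intro y n; rw [Function.iterate_succ_apply']
  have hiterN : ∀ (n : ℕ) (y : X), N ((⇑T)^[n] y) = (⇑T)^[n] (N y) := by
    intro n
    induction n with
    | zero => intro y; rfl
    | succ n ih =>
      intro y
      rw [hiter_succ, hiter_succ, hcomm, ih y]
  have hiter_sub : ∀ (n : ℕ) (a b : X), (⇑T)^[n] (a - b) = (⇑T)^[n] a - (⇑T)^[n] b := by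
    intro n
    induction n with
    | zero => intro a b; rfl
    | succ n ih => intro a b; rw [hiter_succ, hiter_succ, hiter_succ, ih, map_sub]
  have hiter_le : ∀ (n : ℕ) (y : X), ‖(⇑T)^[n] y‖ ≤ ‖y‖ := by
    intro n
    induction n with
    | zero => intro y; exact le_rfl
    | succ n ih => intro y; rw [hiter_succ]; exact (hTle _).trans (ih y)
  -- Step A : for every u, T^[n] (u - N u) → 0
  have hA : ∀ u : X, Tendsto (fun n => ‖(⇑T)^[n] (u - N u)‖) atTop (nhds 0) := by
    intro u
    set a : ℕ → ℝ := fun n => ‖(⇑T)^[n] u‖^2 with ha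
    have hanti : Antitone a := by
      apply antitone_nat_of_succ_le
      intro n
      have := hkey ((⇑T)^[n] u)
      rw [← hiter_succ] at this
      have h2 : (0:ℝ) ≤ c*(1-c)*‖(⇑T)^[n] u - N ((⇑T)^[n] u)‖^2 := by positivity
      simp only [ha]
      nlinarith
    have hbdd : BddBelow (Set.range a) := ⟨0, by rintro r ⟨n, rfl⟩; positivity⟩
    have hconv : Tendsto a atTop (nhds (⨅ n, a n)) := tendsto_atTop_ciInf hanti hbdd
    have hconv' : Tendsto (fun n => a (n+1)) atTop (nhds (⨅ n, a n)) :=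
      hconv.comp (tendsto_add_atTop_nat 1)
    have hdiff : Tendsto (fun n => a n - a (n+1)) atTop (nhds 0) := by
      have := hconv.sub hconv'
      simpa using this
    have hsq : Tendsto (fun n => ‖(⇑T)^[n] (u - N u)‖^2) atTop (nhds 0) := by
      have hle : ∀ n, c*(1-c)*‖(⇑T)^[n] (u - N u)‖^2 ≤ a n - a (n+1) := by
        intro n
        have heq : (⇑T)^[n] (u - N u) = (⇑T)^[n] u - N ((⇑T)^[n] u) := by
          rw [hiter_sub, hiterN]
        rw [heq]
        have := hkey ((⇑T)^[n] u)
        rw [← hiter_succ] at this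
        simp only [ha]
        nlinarith
      have h0le : ∀ n, (0:ℝ) ≤ c*(1-c)*‖(⇑T)^[n] (u - N u)‖^2 := fun n => by positivity
      have hmid : Tendsto (fun n => c*(1-c)*‖(⇑T)^[n] (u - N u)‖^2) atTop (nhds 0) :=
        tendsto_of_tendsto_of_tendsto_of_le_of_le tendsto_const_nhds hdiff h0le hle
      have := hmid.const_mul (c*(1-c))⁻¹
      simp only [mul_zero] at this
      convert this using 2 with n
      rw [← mul_assoc, inv_mul_cancel₀ hcc0.ne', one_mul]
    have := (Real.continuous_sqrt.tendsto 0).comp hsq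
    simp only [Real.sqrt_zero] at this
    convert this using 2 with n
    simp only [Function.comp_apply]
    rw [Real.sqrt_sq (norm_nonneg _)]
  -- fixed points
  have hFixT : ∀ z : X, T z = z ↔ ∀ l, z ∈ M l := by
    intro z
    constructor
    · intro h
      have hnorm : ‖TL M L z‖ = ‖z‖ := by rw [← hT, h]
      obtain ⟨-, hmem⟩ := TL_norm_eq M L z hnorm
      intro l
      exact hmem l (by rw [hL]; exact List.mem_finRange l)
    · intro h
      rw [hT]
      exact TL_fix_of_mem M L z (fun l _ => h l)
  have hFixN : ∀ z : X, N z = z → T z = z := by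
    intro z h
    rw [hTpt z, h]
    module
  -- the fixed space F and W = closure of range (1 - N)
  set F : Submodule ℝ X := LinearMap.ker ((1 : X →L[ℝ] X) - T : X →ₗ[ℝ] X) with hF
  have hFmem : ∀ z : X, z ∈ F ↔ T z = z := by
    intro z
    rw [hF, LinearMap.mem_ker]
    constructor
    · intro h
      have : z - T z = 0 := by
        simpa [ContinuousLinearMap.sub_apply] using h
      linear_combination (norm := abel) -this
    · intro h
      simp [ContinuousLinearMap.sub_apply, h]
  set Wr : Submodule ℝ X := LinearMap.range ((1 : X →L[ℝ] X) - N : X →ₗ[ℝ] X) with hWr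
  have hWrF : Wrᗮ ≤ F := by
    intro u hu
    have h1 : (inner ℝ ((1 - N : X →L[ℝ] X) u) u : ℝ) = 0 := by
      exact (Submodule.mem_orthogonal Wr u).mp hu ((1 - N : X →L[ℝ] X) u)
        (LinearMap.mem_range_self _ u)
    have h2 : (inner ℝ (N u) u : ℝ) = ‖u‖^2 := by
      have : (inner ℝ (u - N u) u : ℝ) = 0 := by
        simpa [ContinuousLinearMap.sub_apply] using h1
      rw [inner_sub_left] at this
      rw [← real_inner_self_eq_norm_sq]
      linarith
    have h3 : ‖N u - u‖^2 ≤ 0 := by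
      rw [norm_sub_sq_real, h2]
      have : ‖N u‖^2 ≤ ‖u‖^2 := pow_le_pow_left₀ (norm_nonneg _) (hN u) 2
      nlinarith
    have h4 : N u = u := by
      have : ‖N u - u‖ = 0 := by nlinarith [norm_nonneg (N u - u), sq_nonneg ‖N u - u‖]
      have := norm_eq_zero.mp this
      linear_combination (norm := abel) this
    exact (hFmem u).mpr (hFixN u h4)
  have hFW : Fᗮ ≤ Wr.topologicalClosure := by
    have h1 : Fᗮ ≤ Wrᗮᗮ := Submodule.orthogonal_le hWrF
    rwa [Submodule.orthogonal_orthogonal_eq_closure] at h1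
  -- the projection point
  set v : X := (Submodule.orthogonalProjectionOnto (⨅ l, M l : Submodule ℝ X) x : X) with hv
  have hvM : ∀ l, v ∈ M l := by
    intro l
    exact (Submodule.mem_iInf M).mp (SetLike.coe_mem _) l
  have hTv : T v = v := (hFixT v).mpr hvM
  have hveq : ∀ n, (⇑T)^[n] v = v := by
    intro n
    induction n with
    | zero => rfl
    | succ n ih => rw [hiter_succ, ih, hTv]
  have hxv : x - v ∈ Fᗮ := by
    rw [Submodule.mem_orthogonal]
    intro u hu
    have huM : u ∈ (⨅ l, M l : Submodule ℝ X) :=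
      (Submodule.mem_iInf M).mpr ((hFixT u).mp ((hFmem u).mp hu))
    have := Submodule.sub_starProjection_mem_orthogonal
      (K := (⨅ l, M l : Submodule ℝ X)) x
    exact (Submodule.mem_orthogonal _ _).mp this u huM
  have hxvW : x - v ∈ closure (Wr : Set X) := by
    exact hFW hxv
  -- final convergence
  have hfun : (fun y : X =>
      (List.finRange k).foldl (fun z l => (Submodule.orthogonalProjectionOnto (M l) z : X)) y) = ⇑T := by
    funext y
    rw [hT, TL_apply_foldl M L y, hL]
  rw [hfun]
  have hshape : ∀ n, (⇑T)^[n] x - v = (⇑T)^[n] (x - v) := by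
    intro n
    rw [hiter_sub, hveq]
  simp only [hshape]
  -- show T^[n] z → 0 for z = x - v ∈ closure Wr
  rw [Metric.tendsto_atTop]
  intro ε hε
  obtain ⟨b, hbW, hbd⟩ := Metric.mem_closure_iff.mp hxvW (ε/2) (by linarith)
  obtain ⟨u, hu⟩ := hbW
  have hbu : b = u - N u := by
    rw [← hu]; simp [ContinuousLinearMap.sub_apply]
  have hAu := hA u
  rw [Metric.tendsto_atTop] at hAu
  obtain ⟨n0, hn0⟩ := hAu (ε/2) (by linarith)
  refine ⟨n0, fun n hn => ?_⟩
  have h1 : ‖(⇑T)^[n] (x - v)‖ ≤ ‖(x - v) - b‖ + ‖(⇑T)^[n] b‖ := by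
    calc ‖(⇑T)^[n] (x - v)‖ = ‖(⇑T)^[n] ((x - v) - b) + (⇑T)^[n] b‖ := by
          rw [hiter_sub n (x - v) b, sub_add_cancel]
      _ ≤ ‖(⇑T)^[n] ((x - v) - b)‖ + ‖(⇑T)^[n] b‖ := norm_add_le _ _
      _ ≤ ‖(x - v) - b‖ + ‖(⇑T)^[n] b‖ := by gcongr; exact hiter_le n _
  have h2 : ‖(⇑T)^[n] b‖ < ε/2 := by
    have := hn0 n hn
    rw [Real.dist_eq, sub_zero, abs_of_nonneg (norm_nonneg _)] at this
    rwa [hbu]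
  have h3 : ‖(x - v) - b‖ < ε/2 := by
    rw [← dist_eq_norm]
    exact hbd
  rw [Real.dist_eq, sub_zero, abs_of_nonneg (norm_nonneg _)]
  linarith
end

section
/- Let M_1 and M_2 be closed linear subspaces of a real Hilbert space X. Suppose x ∈ M_1, x′ = P_{M_2}(x), x″ = P_{M_1}(x′), and x ≠ x″. Define x⁺ := x + (‖x − x′‖²/‖x − x″‖²)(x″ − x) and the hyperplane H := {x̃ ∈ X : ⟨x − x″, x̃⟩ = ⟨x − x″, x⁺⟩}. Then M_1 ∩ M_2 ⊆ H, and the normal vector x − x″ of H satisfies x − x″ ∈ M_1. -/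
open scoped RealInnerProductSpace

/-- for closed subspaces `M₁, M₂`, `x ∈ M₁`, `x' = P_{M₂} x`,
`x'' = P_{M₁} x'`, `x ≠ x''`, the hyperplane
`H = {x̃ : ⟪x - x'', x̃⟫ = ⟪x - x'', x⁺⟫}` with
`x⁺ = x + (‖x - x'‖²/‖x - x''‖²)(x'' - x)` contains `M₁ ∩ M₂`, and its normal
vector `x - x''` lies in `M₁`. -/
theorem hyperplane_contains_intersection
    {X : Type*} [NormedAddCommGroup X] [InnerProductSpace ℝ X] [CompleteSpace X]
    (M₁ M₂ : Submodule ℝ X) [CompleteSpace M₁] [CompleteSpace M₂]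
    (x x' x'' xplus : X) (hx : x ∈ M₁)
    (hx' : x' = (Submodule.orthogonalProjectionOnto M₂ x : X))
    (hx'' : x'' = (Submodule.orthogonalProjectionOnto M₁ x' : X))
    (hne : x ≠ x'')
    (hxplus : xplus = x + (‖x - x'‖ ^ 2 / ‖x - x''‖ ^ 2) • (x'' - x)) :
    ((M₁ : Set X) ∩ (M₂ : Set X)) ⊆
        {y : X | ⟪x - x'', y⟫ = ⟪x - x'', xplus⟫} ∧
      x - x'' ∈ M₁ := by
  have hx''M : x'' ∈ M₁ := hx'' ▸ (Submodule.orthogonalProjectionOnto M₁ x').2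
  have hx'M : x' ∈ M₂ := hx' ▸ (Submodule.orthogonalProjectionOnto M₂ x).2
  have hnorm : ‖x - x''‖ ≠ 0 := by
    simp [sub_eq_zero, hne]
  refine ⟨?_, M₁.sub_mem hx hx''M⟩
  rintro y ⟨hy1, hy2⟩
  have h1 : ⟪x' - x'', x - y⟫ = 0 := by
    rw [hx'']
    exact Submodule.starProjection_inner_eq_zero (K := M₁) x' (x - y) (M₁.sub_mem hx hy1)
  have h2 : ⟪x - x', y - x'⟫ = 0 := by
    rw [hx']
    exact Submodule.starProjection_inner_eq_zero (K := M₂) x _ (M₂.sub_mem hy2 (Submodule.orthogonalProjectionOnto M₂ x).2)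
  have key : ⟪x - x'', x - y⟫ = ‖x - x'‖ ^ 2 := by
    have e1 : x - x'' = (x - x') + (x' - x'') := by abel
    have e2 : x - y = (x - x') - (y - x') := by abel
    rw [e1, inner_add_left, h1, add_zero, e2, inner_sub_right, h2, sub_zero,
      real_inner_self_eq_norm_sq]
  show ⟪x - x'', y⟫ = ⟪x - x'', xplus⟫
  rw [hxplus, inner_add_right, real_inner_smul_right]
  have h3 : ⟪x - x'', x'' - x⟫ = -‖x - x''‖ ^ 2 := by
    rw [show x'' - x = -(x - x'') by abel, inner_neg_right, real_inner_self_eq_norm_sq]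
  rw [h3]
  have hk : ⟪x - x'', y⟫ = ⟪x - x'', x⟫ - ‖x - x'‖ ^ 2 := by
    rw [← key, inner_sub_right]; ring
  rw [hk]
  field_simp
  ring
end

section
/- Let X be a real Hilbert space and let x, x′, x″ ∈ X satisfy ⟨x′ − x″, x − x″⟩ = 0 and x ≠ x″. Define the hyperplanes H′ := {x̃ ∈ X : ⟨x − x′, x̃ − x′⟩ = 0} and H″ := {x̃ ∈ X : ⟨x′ − x″, x̃ − x″⟩ = 0}, and set x⁺ := x + (‖x − x′‖²/‖x − x″‖²)(x″ − x). Then x⁺ ∈ H′ ∩ H″ and x⁺ is the point of the closed affine subspace H′ ∩ H″ nearest to x″, i.e. x⁺ is the orthogonal projection of x″ onto H′ ∩ H″. -/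
open scoped RealInnerProductSpace

/-- if `⟪x' - x'', x - x''⟫ = 0` and `x ≠ x''`, then
`x⁺ = x + (‖x - x'‖²/‖x - x''‖²)(x'' - x)` lies in `H' ∩ H''`, where
`H' = {x̃ : ⟪x - x', x̃ - x'⟫ = 0}` and `H'' = {x̃ : ⟪x' - x'', x̃ - x''⟫ = 0}`,
and `x⁺` is the nearest point of `H' ∩ H''` to `x''`, i.e. the orthogonal
projection of `x''` onto the closed affine subspace `H' ∩ H''`. -/
theorem proj_onto_intersection_of_two_hyperplanes
    {X : Type*} [NormedAddCommGroup X] [InnerProductSpace ℝ X] [CompleteSpace X]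
    (x x' x'' xplus : X)
    (horth : ⟪x' - x'', x - x''⟫ = 0) (hne : x ≠ x'')
    (hxplus : xplus = x + (‖x - x'‖ ^ 2 / ‖x - x''‖ ^ 2) • (x'' - x)) :
    xplus ∈ ({y : X | ⟪x - x', y - x'⟫ = 0} ∩ {y : X | ⟪x' - x'', y - x''⟫ = 0}) ∧
      ∀ y ∈ ({y : X | ⟪x - x', y - x'⟫ = 0} ∩ {y : X | ⟪x' - x'', y - x''⟫ = 0}),
        ‖x'' - xplus‖ ≤ ‖x'' - y‖ := by
  set t : ℝ := ‖x - x'‖ ^ 2 / ‖x - x''‖ ^ 2 with ht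
  have hb0 : x - x'' ≠ 0 := sub_ne_zero.mpr hne
  have hb2 : ‖x - x''‖ ^ 2 ≠ 0 := pow_ne_zero 2 (norm_ne_zero_iff.mpr hb0)
  have hab : ⟪x - x', x - x''⟫ = ‖x - x''‖ ^ 2 := by
    have h := horth
    rw [show x' - x'' = (x - x'') - (x - x') by abel, inner_sub_left,
      real_inner_self_eq_norm_sq] at h
    linarith
  have hA : ⟪x - x', xplus - x'⟫ = 0 := by
    rw [show xplus - x' = (x - x') + t • (-(x - x'')) by rw [hxplus]; module,
      inner_add_right, real_inner_smul_right, inner_neg_right, hab,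
      real_inner_self_eq_norm_sq, ht]
    field_simp
    ring
  have hB : ⟪x' - x'', xplus - x''⟫ = 0 := by
    rw [show xplus - x'' = (1 - t) • (x - x'') by rw [hxplus]; module,
      real_inner_smul_right, horth, mul_zero]
  refine ⟨⟨hA, hB⟩, ?_⟩
  rintro y ⟨hy1, hy2⟩
  simp only [Set.mem_setOf_eq] at hy1 hy2
  have e1 : ⟪x - x', xplus - y⟫ = 0 := by
    rw [show xplus - y = (xplus - x') - (y - x') by abel, inner_sub_right, hA, hy1, sub_zero]
  have e2 : ⟪x' - x'', xplus - y⟫ = 0 := by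
    rw [show xplus - y = (xplus - x'') - (y - x'') by abel, inner_sub_right, hB, hy2, sub_zero]
  have e3 : ⟪x - x'', xplus - y⟫ = 0 := by
    rw [show x - x'' = (x - x') + (x' - x'') by abel, inner_add_left, e1, e2, add_zero]
  have key : ⟪x'' - xplus, xplus - y⟫ = 0 := by
    rw [show x'' - xplus = (t - 1) • (x - x'') by rw [hxplus]; module,
      real_inner_smul_left, e3, mul_zero]
  have pyth : ‖x'' - y‖ ^ 2 = ‖x'' - xplus‖ ^ 2 + ‖xplus - y‖ ^ 2 := by
    rw [show x'' - y = (x'' - xplus) + (xplus - y) by abel, norm_add_sq_real, key]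
    ring
  nlinarith [norm_nonneg (xplus - y), norm_nonneg (x'' - y), norm_nonneg (x'' - xplus)]
end

section
/- Let {a_j}_{j≥1} be a sequence of nonnegative real numbers such that ∑_{j=1}^∞ a_j² converges. Then there is a strictly increasing sequence of indices {j_t}_t such that the sequence {∑_{s=1}^{j_t} a_s · a_{j_t}}_t converges to zero. -/
open Filter

set_option maxHeartbeats 1000000

/-- Sum of squares lemma, Boyle–Dykstra: if `{a_j}` is a
sequence of nonnegative reals with `∑ a_j²` convergent, then there is a
strictly increasing sequence of indices `{j_t}` such that
`(∑_{s ≤ j_t} a_s) · a_{j_t} → 0`. -/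
theorem sum_of_squares_subsequence
    (a : ℕ → ℝ) (ha : ∀ j, 0 ≤ a j) (hsum : Summable (fun j => (a j) ^ 2)) :
    ∃ j : ℕ → ℕ, StrictMono j ∧
      Tendsto (fun t => (∑ s ∈ Finset.range (j t + 1), a s) * a (j t))
        atTop (nhds 0) := by
  classical
  set b : ℕ → ℝ := fun m => (∑ s ∈ Finset.range (m + 1), a s) * a m with hbdef
  set A : ℝ := ∑' j, (a j) ^ 2 with hAdef
  set T : ℕ → ℝ := fun N => ∑' k, (a (k + (N + 1))) ^ 2 with hTdef
  have hA0 : 0 ≤ A := tsum_nonneg fun j => sq_nonneg _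
  have hT0 : ∀ N, 0 ≤ T N := fun N => tsum_nonneg fun k => sq_nonneg _
  have hb0 : ∀ m, 0 ≤ b m := fun m =>
    mul_nonneg (Finset.sum_nonneg fun s _ => ha s) (ha m)
  -- key: for each N ≥ 1 there is m > N with b m ≤ √(3 A T N)
  have key : ∀ N : ℕ, 1 ≤ N → ∃ m, N < m ∧ b m ≤ Real.sqrt (3 * A * T N) := by
    intro N hN
    have hne : (Finset.Ioc N (2 * N)).Nonempty := ⟨N + 1, by
      simp only [Finset.mem_Ioc]; omega⟩
    obtain ⟨m, hm, hmin⟩ := Finset.exists_min_image _ b hne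
    obtain ⟨hm1, hm2⟩ := Finset.mem_Ioc.mp hm
    refine ⟨m, hm1, ?_⟩
    have hcard : (Finset.Ioc N (2 * N)).card = N := by
      rw [Nat.card_Ioc]; omega
    -- Step 1 : N * b m ≤ ∑_{j ∈ Ioc N 2N} b j
    have h1 : (N : ℝ) * b m ≤ ∑ j ∈ Finset.Ioc N (2 * N), b j := by
      calc (N : ℝ) * b m = ∑ _j ∈ Finset.Ioc N (2 * N), b m := by
            rw [Finset.sum_const, hcard, nsmul_eq_mul]
        _ ≤ ∑ j ∈ Finset.Ioc N (2 * N), b j := Finset.sum_le_sum hmin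
    -- Step 2 : the sum is at most S(2N) * ∑ a j over the block
    have h2 : ∑ j ∈ Finset.Ioc N (2 * N), b j ≤
        (∑ s ∈ Finset.range (2 * N + 1), a s) * ∑ j ∈ Finset.Ioc N (2 * N), a j := by
      rw [Finset.mul_sum]
      refine Finset.sum_le_sum fun j hj => ?_
      obtain ⟨hj1, hj2⟩ := Finset.mem_Ioc.mp hj
      exact mul_le_mul_of_nonneg_right
        (Finset.sum_le_sum_of_subset_of_nonneg
          (Finset.range_subset_range.mpr (by omega)) (fun i _ _ => ha i)) (ha j)
    -- Step 3 : S(2N)² ≤ (2N+1) A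
    have h3 : (∑ s ∈ Finset.range (2 * N + 1), a s) ^ 2 ≤ (2 * N + 1 : ℝ) * A := by
      calc (∑ s ∈ Finset.range (2 * N + 1), a s) ^ 2
          ≤ (Finset.range (2 * N + 1)).card * ∑ s ∈ Finset.range (2 * N + 1), (a s) ^ 2 :=
            sq_sum_le_card_mul_sum_sq
        _ ≤ (2 * N + 1 : ℝ) * A := by
            rw [Finset.card_range]
            push_cast
            exact mul_le_mul_of_nonneg_left
              (Summable.sum_le_tsum _ (fun i _ => sq_nonneg _) hsum) (by positivity)
    -- Step 4 : (∑ block a)² ≤ N * T N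
    have h4 : (∑ j ∈ Finset.Ioc N (2 * N), a j) ^ 2 ≤ (N : ℝ) * T N := by
      have hsq : ∑ j ∈ Finset.Ioc N (2 * N), (a j) ^ 2 ≤ T N := by
        have hre : ∑ j ∈ Finset.Ioc N (2 * N), (a j) ^ 2
            = ∑ i ∈ Finset.range N, (a (i + (N + 1))) ^ 2 := by
          rw [← Finset.Ico_add_one_add_one_eq_Ioc, Finset.sum_Ico_eq_sum_range,
            show 2 * N + 1 - (N + 1) = N from by omega]
          exact Finset.sum_congr rfl fun i _ => by rw [Nat.add_comm]
        rw [hre]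
        exact Summable.sum_le_tsum _ (fun i _ => sq_nonneg _)
          ((summable_nat_add_iff (N + 1)).mpr hsum)
      calc (∑ j ∈ Finset.Ioc N (2 * N), a j) ^ 2
          ≤ (Finset.Ioc N (2 * N)).card * ∑ j ∈ Finset.Ioc N (2 * N), (a j) ^ 2 :=
            sq_sum_le_card_mul_sum_sq
        _ ≤ (N : ℝ) * T N := by
            rw [hcard]
            exact mul_le_mul_of_nonneg_left hsq (by positivity)
    -- combine
    have hS0 : 0 ≤ ∑ s ∈ Finset.range (2 * N + 1), a s :=
      Finset.sum_nonneg fun s _ => ha s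
    have ha0 : 0 ≤ ∑ j ∈ Finset.Ioc N (2 * N), a j :=
      Finset.sum_nonneg fun j _ => ha j
    have hsum0 : 0 ≤ ∑ j ∈ Finset.Ioc N (2 * N), b j :=
      Finset.sum_nonneg fun j _ => hb0 j
    have hbm : (b m) ^ 2 ≤ 3 * A * T N := by
      have hNpos : (1 : ℝ) ≤ (N : ℝ) := by exact_mod_cast hN
      have hAT : 0 ≤ A * T N := mul_nonneg hA0 (hT0 N)
      have E : ((N : ℝ) * b m) ^ 2 ≤ ((2 * N + 1) * A) * ((N : ℝ) * T N) := by
        calc ((N : ℝ) * b m) ^ 2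
            ≤ (∑ j ∈ Finset.Ioc N (2 * N), b j) ^ 2 :=
              pow_le_pow_left₀ (mul_nonneg (Nat.cast_nonneg N) (hb0 m)) h1 2
          _ ≤ ((∑ s ∈ Finset.range (2 * N + 1), a s) *
                ∑ j ∈ Finset.Ioc N (2 * N), a j) ^ 2 :=
              pow_le_pow_left₀ hsum0 h2 2
          _ = (∑ s ∈ Finset.range (2 * N + 1), a s) ^ 2 *
                (∑ j ∈ Finset.Ioc N (2 * N), a j) ^ 2 := by ring
          _ ≤ ((2 * N + 1) * A) * ((N : ℝ) * T N) :=
              mul_le_mul h3 h4 (sq_nonneg _) (by positivity)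
      have E2 : (N : ℝ) ^ 2 * (b m ^ 2) ≤ (N : ℝ) ^ 2 * (3 * A * T N) := by
        nlinarith [E, mul_nonneg (mul_nonneg (sub_nonneg.2 hNpos)
          (Nat.cast_nonneg N : (0 : ℝ) ≤ (N : ℝ))) hAT]
      exact (mul_le_mul_iff_right₀ (by positivity : (0 : ℝ) < (N : ℝ) ^ 2)).mp E2
    have := Real.sqrt_le_sqrt hbm
    rwa [Real.sqrt_sq (hb0 m)] at this
  -- package the choice, removing the `1 ≤ N` side condition
  have key' : ∀ N : ℕ, ∃ m, N < m ∧ b m ≤ Real.sqrt (3 * A * T (max N 1)) := by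
    intro N
    obtain ⟨m, hm, hle⟩ := key (max N 1) (le_max_right _ _)
    exact ⟨m, lt_of_le_of_lt (le_max_left N 1) hm, hle⟩
  choose f hf1 hf2 using key'
  refine ⟨fun t => f^[t + 1] 0, ?_, ?_⟩
  · refine strictMono_nat_of_lt_succ fun t => ?_
    show f^[t + 1] 0 < f^[t + 1 + 1] 0
    rw [Function.iterate_succ_apply' f (t + 1) 0]
    exact hf1 _
  · set j : ℕ → ℕ := fun t => f^[t + 1] 0 with hj
    have hjmono : StrictMono j := strictMono_nat_of_lt_succ fun t => by
      show f^[t + 1] 0 < f^[t + 1 + 1] 0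
      rw [Function.iterate_succ_apply' f (t + 1) 0]
      exact hf1 _
    have hTlim : Tendsto (fun N : ℕ => Real.sqrt (3 * A * T N)) atTop (nhds 0) := by
      have h1 : Tendsto T atTop (nhds 0) := by
        have := (tendsto_sum_nat_add fun k => (a k) ^ 2).comp (tendsto_add_atTop_nat 1)
        exact this
      have h2 : Tendsto (fun N => 3 * A * T N) atTop (nhds 0) := by
        simpa using h1.const_mul (3 * A)
      have h3 : Tendsto Real.sqrt (nhds 0) (nhds 0) := by
        simpa [Real.sqrt_zero] using (Real.continuous_sqrt.tendsto 0)
      exact h3.comp h2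
    have hmax : Tendsto (fun t => max (j t) 1) atTop atTop :=
      tendsto_atTop_mono (fun t => le_trans (hjmono.id_le t) (le_max_left _ _))
        tendsto_id
    have hshift : Tendsto (fun t => b (j (t + 1))) atTop (nhds 0) := by
      refine tendsto_of_tendsto_of_tendsto_of_le_of_le tendsto_const_nhds
        (hTlim.comp hmax) (fun t => hb0 _) (fun t => ?_)
      have : j (t + 1) = f (j t) := Function.iterate_succ_apply' f (t + 1) 0
      rw [this]
      exact hf2 (j t)
    exact (tendsto_add_atTop_iff_nat 1).mp hshift
end

section
/- Let M_1, ..., M_k be closed linear subspaces of a real Hilbert space X and M := ⋂_{l=1}^k M_l. Let x_0 ∈ X and let {x_i}_{i≥0} be a sequence in X satisfying: (1) {x_i} is Fejér monotone with respect to M, i.e. ‖x_{i+1} − c‖ ≤ ‖x_i − c‖ for all c ∈ M and all i; (2) there exists a strictly increasing sequence of indices {i_t}_t with limsup_{t→∞} ⟨x_{i_t} − x_0, x_{i_t}⟩ ≤ 0; (3) for every l ∈ {1,...,k} and every i > 0 there is an integer p_i^l > 0 such that x_{i+p_i^l} ∈ M_l and lim_{i→∞} ‖x_i − x_{i+p_i^l}‖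 = 0; (4) x_i − x_0 ∈ M^⊥ for all i. Then {x_i} converges strongly to P_M(x_0). -/
open Filter
open scoped RealInnerProductSpace

/-- Conditions for strong convergence: let `M l` be closed
linear subspaces of a real Hilbert space with intersection `M = ⨅ l, M l`,
and let `{x_i}` be a sequence such that
(1) `{x_i}` is Fejér monotone with respect to `M`;
(2) there is a strictly increasing sequence of indices `{i_t}` with
    `limsup_t ⟪x_{i_t} - x_0, x_{i_t}⟫ ≤ 0`;
(3) for every `l` and every `i > 0` there is `p_i^l > 0` with
    `x_{i + p_i^l} ∈ M l` and `‖x_i - x_{i + p_i^l}‖ → 0`;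
(4) `x_i - x_0 ∈ Mᗮ` for all `i`.
Then `{x_i}` converges strongly to `P_M(x_0)`. -/
theorem conditions_for_strong_convergence
    {X : Type*} [NormedAddCommGroup X] [InnerProductSpace ℝ X] [CompleteSpace X]
    {k : ℕ} (M : Fin k → Submodule ℝ X) [∀ l, CompleteSpace (M l)]
    [CompleteSpace (⨅ l, M l : Submodule ℝ X)]
    (x : ℕ → X)
    (h1 : ∀ c ∈ (⨅ l, M l : Submodule ℝ X), ∀ i, ‖x (i + 1) - c‖ ≤ ‖x i - c‖)
    (h2 : ∃ idx : ℕ → ℕ, StrictMono idx ∧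
      limsup (fun t => ⟪x (idx t) - x 0, x (idx t)⟫) atTop ≤ 0)
    (h3 : ∀ l : Fin k, ∃ p : ℕ → ℕ,
      (∀ i, 0 < i → 0 < p i ∧ x (i + p i) ∈ M l) ∧
      Tendsto (fun i => ‖x i - x (i + p i)‖) atTop (nhds 0))
    (h4 : ∀ i, x i - x 0 ∈ (⨅ l, M l : Submodule ℝ X)ᗮ) :
    Tendsto x atTop
      (nhds (Submodule.orthogonalProjectionOnto (⨅ l, M l : Submodule ℝ X) (x 0) : X)) := by
  set K : Submodule ℝ X := ⨅ l, M l with hK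
  set m : X := (Submodule.orthogonalProjectionOnto K (x 0) : X) with hm
  have hmK : m ∈ K := (Submodule.orthogonalProjectionOnto K (x 0)).2
  have hx0m : x 0 - m ∈ Kᗮ := by exact K.sub_starProjection_mem_orthogonal (x 0)
  have hperp : ∀ i, x i - m ∈ Kᗮ := by
    intro i
    have h : x i - m = (x i - x 0) + (x 0 - m) := by abel
    rw [h]; exact Kᗮ.add_mem (h4 i) hx0m
  -- antitone norm
  have hanti : Antitone fun i => ‖x i - m‖ :=
    antitone_nat_of_succ_le fun i => h1 m hmK i
  have hB : ∀ i, ‖x i - m‖ ≤ ‖x 0 - m‖ := fun i => hanti (Nat.zero_le i)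
  have hbdd : BddBelow (Set.range fun i => ‖x i - m‖) :=
    ⟨0, by rintro _ ⟨i, rfl⟩; positivity⟩
  set d : ℝ := ⨅ i, ‖x i - m‖ with hd
  have hdten : Tendsto (fun i => ‖x i - m‖) atTop (nhds d) :=
    tendsto_atTop_ciInf hanti hbdd
  have hd0 : 0 ≤ d := le_ciInf fun i => norm_nonneg _
  -- inner products with elements of ⨆ (M l)ᗮ tend to 0
  have hsup : ∀ v ∈ (⨆ l, (M l)ᗮ : Submodule ℝ X),
      Tendsto (fun i => ⟪v, x i - m⟫) atTop (nhds 0) := by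
    intro v hv
    refine Submodule.iSup_induction (motive := fun v =>
      Tendsto (fun i => ⟪v, x i - m⟫) atTop (nhds (0:ℝ))) _ hv ?_ ?_ ?_
    · intro l v hvl
      obtain ⟨p, hp, hpt⟩ := h3 l
      have hml : K ≤ M l := iInf_le M l
      have key : ∀ i, 0 < i → ⟪v, x i - m⟫ = ⟪v, x i - x (i + p i)⟫ := by
        intro i hi
        have h1' : ⟪v, x (i + p i)⟫ = 0 := by
          rw [real_inner_comm]
          exact hvl _ (hp i hi).2
        have h2' : ⟪v, m⟫ = 0 := by
          rw [real_inner_comm]; exact hvl _ (hml hmK)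
        rw [inner_sub_right, inner_sub_right, h1', h2']
      have hbound : ∀ᶠ i in atTop, ‖⟪v, x i - m⟫‖ ≤ ‖v‖ * ‖x i - x (i + p i)‖ := by
        filter_upwards [eventually_gt_atTop 0] with i hi
        rw [key i hi]
        exact (norm_inner_le_norm v _)
      have hlim : Tendsto (fun i => ‖v‖ * ‖x i - x (i + p i)‖) atTop (nhds 0) := by
        simpa using hpt.const_mul ‖v‖
      exact squeeze_zero_norm' hbound hlim
    · simp
    · intro a b ha hb
      simpa [inner_add_left] using ha.add hb
  -- closure
  have hclos : Kᗮ = (⨆ l, (M l)ᗮ : Submodule ℝ X).topologicalClosure := by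
    have hKeq : K = (⨆ l, (M l)ᗮ : Submodule ℝ X)ᗮ := by
      rw [← Submodule.iInf_orthogonal]
      exact iInf_congr fun l => (Submodule.orthogonal_orthogonal (M l)).symm
    rw [hKeq, Submodule.orthogonal_orthogonal_eq_closure]
  -- inner with x 0 - m tends to 0
  have hg : Tendsto (fun i => ⟪x 0 - m, x i - m⟫) atTop (nhds 0) := by
    rw [Metric.tendsto_atTop]
    intro ε hε
    have hw : (x 0 - m) ∈ closure ((⨆ l, (M l)ᗮ : Submodule ℝ X) : Set X) := by
      have := hx0m; rw [hclos] at this; exact this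
    set B : ℝ := ‖x 0 - m‖ + 1 with hBdef
    have hBpos : 0 < B := by positivity
    obtain ⟨v, hvmem, hvnear⟩ := Metric.mem_closure_iff.1 hw (ε / (2 * B)) (by positivity)
    obtain ⟨N, hN⟩ := (Metric.tendsto_atTop.1 (hsup v hvmem)) (ε / 2) (by positivity)
    refine ⟨N + 1, fun i hi => ?_⟩
    have h5 : ⟪x 0 - m, x i - m⟫ = ⟪x 0 - m - v, x i - m⟫ + ⟪v, x i - m⟫ := by
      rw [← inner_add_left, sub_add_cancel]
    have h6 : ‖⟪x 0 - m - v, x i - m⟫‖ ≤ (ε / (2 * B)) * B := by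
      calc ‖⟪x 0 - m - v, x i - m⟫‖ ≤ ‖x 0 - m - v‖ * ‖x i - m‖ := norm_inner_le_norm _ _
        _ ≤ (ε / (2 * B)) * B := by
            apply mul_le_mul (le_of_lt ?_) ?_ (norm_nonneg _) (by positivity)
            · rw [dist_eq_norm] at hvnear; exact hvnear
            · calc ‖x i - m‖ ≤ ‖x 0 - m‖ := hB i
                _ ≤ B := by simp [hBdef]
    have h7 : ‖⟪v, x i - m⟫‖ < ε / 2 := by
      have := hN i (le_trans (Nat.le_succ N) hi)
      rwa [Real.dist_eq, sub_zero] at this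
    have h8 : (ε / (2 * B)) * B = ε / 2 := by field_simp
    rw [Real.dist_eq, sub_zero, h5]
    calc ‖⟪x 0 - m - v, x i - m⟫ + ⟪v, x i - m⟫‖
        ≤ ‖⟪x 0 - m - v, x i - m⟫‖ + ‖⟪v, x i - m⟫‖ := norm_add_le _ _
      _ < ε / 2 + ε / 2 := by
          apply add_lt_add_of_le_of_lt _ h7
          rw [← h8] at *; exact h6
      _ = ε := by ring
  -- key identity
  have hid : ∀ i, ‖x i - m‖ ^ 2 = ⟪x i - x 0, x i⟫ + ⟪x 0 - m, x i - m⟫ := by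
    intro i
    have e1 : ⟪x i - x 0, m⟫ = 0 := (Submodule.mem_orthogonal' K _).1 (h4 i) m hmK
    have e2 : x i - m = (x i - x 0) + (x 0 - m) := by abel
    calc ‖x i - m‖ ^ 2 = ⟪x i - m, x i - m⟫ := (real_inner_self_eq_norm_sq _).symm
      _ = ⟪x i - x 0, x i - m⟫ + ⟪x 0 - m, x i - m⟫ := by
          nth_rewrite 1 [e2]; rw [inner_add_left]
      _ = ⟪x i - x 0, x i⟫ + ⟪x 0 - m, x i - m⟫ := by
          rw [inner_sub_right, e1, sub_zero]
  -- subsequence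
  obtain ⟨idx, hmono, hls⟩ := h2
  have hsub : Tendsto (fun t => ‖x (idx t) - m‖) atTop (nhds d) :=
    hdten.comp hmono.tendsto_atTop
  have hsubsq : Tendsto (fun t => ‖x (idx t) - m‖ ^ 2) atTop (nhds (d ^ 2)) := by
    simpa using hsub.pow 2
  have hgsub : Tendsto (fun t => ⟪x 0 - m, x (idx t) - m⟫) atTop (nhds 0) :=
    hg.comp hmono.tendsto_atTop
  have hinner : Tendsto (fun t => ⟪x (idx t) - x 0, x (idx t)⟫) atTop (nhds (d ^ 2)) := by
    have : (fun t => ⟪x (idx t) - x 0, x (idx t)⟫)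
        = fun t => ‖x (idx t) - m‖ ^ 2 - ⟪x 0 - m, x (idx t) - m⟫ := by
      funext t; rw [hid (idx t)]; ring
    rw [this]
    simpa using hsubsq.sub hgsub
  have hd2 : d ^ 2 ≤ 0 := by
    have := hinner.limsup_eq
    rw [this] at hls
    exact hls
  have hdz : d = 0 := by nlinarith
  have : Tendsto (fun i => ‖x i - m‖) atTop (nhds 0) := hdz ▸ hdten
  have hx : Tendsto (fun i => x i - m) atTop (nhds 0) :=
    tendsto_zero_iff_norm_tendsto_zero.2 this
  have := hx.add_const m
  simpa using this
end

section
/- Consider Algorithm 1 (Accelerated Projections): let M_1,...,M_k be closed linear subspaces of a real Hilbert space X, M := ⋂_{l=1}^k M_l, and x_0 ∈ X. For each i ≥ 0 choose l_i ∈ {1,...,k}, set x̃_i := P_{M_{l_i}}(x_i), a_i := x_i − x̃_i, and H_i := {x ∈ X : ⟨a_i, x⟩ = 0} (so H_i = X when a_i = 0, and M ⊆ M_{l_i} ⊆ H_i); choose J_i ⊆ {0,1,...,i} with i ∈ J_i, set H̃_i := ⋂_{j∈J_i} H_j, and x_{i+1} := P_{H̃_i}(x̃_i). Suppose additionally: (A)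 there is an integer p̄ ≥ 0 such that for every l ∈ {1,...,k} and every i > 0 there is an integer p_i^l ∈ [0, p̄] with l_{i+p_i^l} = l (so that x̃_{i+p_i^l} = P_{M_l}(x_{i+p_i^l})); and (B) for every i, x_0 − x_i lies in the linear span of {a_j : j ∈ J_i}. Then the sequence {x_i} converges strongly to P_M(x_0). -/
open Filter
open scoped RealInnerProductSpace

private lemma min_orth {X : Type*} [NormedAddCommGroup X] [InnerProductSpace ℝ X]
    {P : X → Prop} (hadd : ∀ u v, P u → P v → P (u + v))
    (hsmul : ∀ (c : ℝ) v, P v → P (c • v))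
    {u v : X} (hv : P v) (hmin : ∀ w, P w → ‖u - v‖ ≤ ‖u - w‖) :
    ∀ w, P w → ⟪u - v, w⟫ = 0 := by
  intro w hw
  by_contra h
  have hw0 : w ≠ 0 := by rintro rfl; simp at h
  have hnw : (0:ℝ) < ‖w‖ ^ 2 := pow_pos (norm_pos_iff.mpr hw0) 2
  set c : ℝ := ⟪u - v, w⟫ with hc
  set t : ℝ := c / ‖w‖ ^ 2 with ht
  have htw : t * ‖w‖ ^ 2 = c := div_mul_cancel₀ _ (ne_of_gt hnw)
  have hle := hmin (v + t • w) (hadd _ _ hv (hsmul _ _ hw))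
  have hre : u - (v + t • w) = (u - v) - t • w := by abel
  rw [hre] at hle
  have h2 : ‖u - v‖ ^ 2 ≤ ‖(u - v) - t • w‖ ^ 2 :=
    pow_le_pow_left₀ (norm_nonneg _) hle 2
  have hexp : ‖(u - v) - t • w‖ ^ 2
      = ‖u - v‖ ^ 2 - 2 * (t * c) + t ^ 2 * ‖w‖ ^ 2 := by
    rw [norm_sub_sq_real, real_inner_smul_right, norm_smul, Real.norm_eq_abs,
      mul_pow, sq_abs]
  have hc2 : 0 < c ^ 2 := lt_of_le_of_ne (sq_nonneg c) (Ne.symm (pow_ne_zero 2 h))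
  have htc : t * c = c ^ 2 / ‖w‖ ^ 2 := by rw [ht]; ring
  have ht2 : t ^ 2 * ‖w‖ ^ 2 = t * c := by
    calc t ^ 2 * ‖w‖ ^ 2 = t * (t * ‖w‖ ^ 2) := by ring
    _ = t * c := by rw [htw]
  have hpos : 0 < t * c := by rw [htc]; positivity
  nlinarith

private lemma proj_min {X : Type*} [NormedAddCommGroup X] [InnerProductSpace ℝ X]
    {K : Submodule ℝ X} [K.HasOrthogonalProjection] (u z : X) (hz : z ∈ K) :
    ‖u - (Submodule.orthogonalProjectionOnto K u : X)‖ ≤ ‖u - z‖ := by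
  have hperp : u - (Submodule.orthogonalProjectionOnto K u : X) ∈ Kᗮ := K.sub_starProjection_mem_orthogonal u
  have hmem : (Submodule.orthogonalProjectionOnto K u : X) - z ∈ K :=
    Submodule.sub_mem _ (SetLike.coe_mem _) hz
  have hz0 : ⟪u - (Submodule.orthogonalProjectionOnto K u : X), (Submodule.orthogonalProjectionOnto K u : X) - z⟫ = 0 :=
    (Submodule.mem_orthogonal' _ _).1 hperp _ hmem
  have hre : u - z = (u - (Submodule.orthogonalProjectionOnto K u : X)) + ((Submodule.orthogonalProjectionOnto K u : X) - z) := by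
    abel
  have := norm_add_sq_real (u - (Submodule.orthogonalProjectionOnto K u : X)) ((Submodule.orthogonalProjectionOnto K u : X) - z)
  rw [hz0] at this
  rw [hre]
  nlinarith [norm_nonneg (u - (Submodule.orthogonalProjectionOnto K u : X)),
    norm_nonneg ((u - (Submodule.orthogonalProjectionOnto K u : X)) + ((Submodule.orthogonalProjectionOnto K u : X) - z)),
    sq_nonneg ‖(Submodule.orthogonalProjectionOnto K u : X) - z‖]

/-- Strong convergence of Algorithm 1, Version 1: in Algorithm 1
(`x̃_i = P_{M_{l_i}} x_i`, `a_i = x_i - x̃_i`, `H_i = {x : ⟪a_i, x⟫ = 0}`,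
`i ∈ J_i ⊆ {0,…,i}`, `H̃_i = ⋂_{j ∈ J_i} H_j`, `x_{i+1} = P_{H̃_i}(x̃_i)`),
assume (A) there is `p̄` such that for every `l` and every `i > 0` there is
`p_i^l ∈ [0, p̄]` with `l_{i+p_i^l} = l`, and (B) `x_0 - x_i` lies in the span
of `{a_j : j ∈ J_i}` for every `i`.  Then `x_i → P_M(x_0)` strongly, where
`M = ⨅ l, M l`. -/
theorem algorithm1_strong_convergence_version1
    {X : Type*} [NormedAddCommGroup X] [InnerProductSpace ℝ X] [CompleteSpace X]
    {k : ℕ} (M : Fin k → Submodule ℝ X) [∀ l, CompleteSpace (M l)]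
    [CompleteSpace (⨅ l, M l : Submodule ℝ X)]
    (l : ℕ → Fin k) (x xt a : ℕ → X) (J : ℕ → Finset ℕ)
    (hxt : ∀ i, xt i = ((M (l i)).orthogonalProjectionOnto (x i) : X))
    (ha : ∀ i, a i = x i - xt i)
    (hJ : ∀ i, i ∈ J i ∧ ∀ j ∈ J i, j ≤ i)
    -- `x_{i+1}` is the orthogonal projection of `x̃_i` onto
    -- `H̃_i = ⋂_{j ∈ J_i} {y : ⟪a_j, y⟫ = 0}`:
    (hstep : ∀ i,
      (∀ j ∈ J i, ⟪a j, x (i + 1)⟫ = 0) ∧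
      ∀ y : X, (∀ j ∈ J i, ⟪a j, y⟫ = 0) → ‖xt i - x (i + 1)‖ ≤ ‖xt i - y‖)
    -- condition (A):
    (hA : ∃ pbar : ℕ, ∀ lidx : Fin k, ∀ i, 0 < i →
      ∃ p ≤ pbar, l (i + p) = lidx)
    -- condition (B):
    (hB : ∀ i, x 0 - x i ∈ Submodule.span ℝ (a '' (J i : Set ℕ))) :
    Tendsto x atTop
      (nhds ((⨅ l, M l : Submodule ℝ X).orthogonalProjectionOnto (x 0) : X)) := by
  set Minf : Submodule ℝ X := ⨅ l, M l with hMinf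
  set mh : X := (Submodule.orthogonalProjectionOnto Minf (x 0) : X) with hmh
  have hmhM : mh ∈ Minf := SetLike.coe_mem _
  have hMle : ∀ lidx, Minf ≤ M lidx := fun lidx => iInf_le _ lidx
  have hxtmem : ∀ i, xt i ∈ M (l i) := fun i => (hxt i) ▸ SetLike.coe_mem _
  -- a j is orthogonal to M (l j)
  have haperp : ∀ j, ∀ m ∈ M (l j), ⟪a j, m⟫ = 0 := by
    intro j m hm
    have h1 : x j - (Submodule.orthogonalProjectionOnto (M (l j)) (x j) : X) ∈ (M (l j))ᗮ :=
      Submodule.sub_starProjection_mem_orthogonal (x j)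
    rw [ha j, hxt j]
    exact (Submodule.mem_orthogonal' _ _).1 h1 m hm
  have haMinf : ∀ j, ∀ m ∈ Minf, ⟪a j, m⟫ = 0 := fun j m hm =>
    haperp j m (hMle (l j) hm)
  -- orthogonality of xt i - x (i+1) to the constraint set
  have horth : ∀ i, ∀ w, (∀ j ∈ J i, ⟪a j, w⟫ = 0) → ⟪xt i - x (i + 1), w⟫ = 0 := by
    intro i
    refine min_orth (P := fun y => ∀ j ∈ J i, ⟪a j, y⟫ = 0) ?_ ?_ (hstep i).1
      (fun w hw => (hstep i).2 w hw)
    · intro u v hu hv j hj; rw [inner_add_right, hu j hj, hv j hj, add_zero]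
    · intro c v hv j hj; rw [real_inner_smul_right, hv j hj, mul_zero]
  -- (B): x 0 - x i is orthogonal to the constraint set
  have hspanperp : ∀ i, ∀ w, (∀ j ∈ J i, ⟪a j, w⟫ = 0) → ⟪x 0 - x i, w⟫ = 0 := by
    intro i w hw
    refine Submodule.span_induction ?_ ?_ ?_ ?_ (hB i)
    · rintro v ⟨j, hj, rfl⟩
      exact hw j (Finset.mem_coe.mp hj)
    · exact inner_zero_left _
    · intro u v _ _ hu hv; rw [inner_add_left, hu, hv, add_zero]
    · intro c v _ hv; rw [real_inner_smul_left, hv, mul_zero]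
  have hx0perp : ∀ i, ∀ w, (∀ j ∈ J i, ⟪a j, w⟫ = 0) → ⟪x 0 - x (i + 1), w⟫ = 0 := by
    intro i w hw
    have hre : x 0 - x (i + 1) = (x 0 - x i) + a i + (xt i - x (i + 1)) := by
      rw [ha i]; abel
    rw [hre, inner_add_left, inner_add_left, hspanperp i w hw, hw i (hJ i).1,
      horth i w hw]
    ring
  -- elements of M i satisfy the constraints
  have hMcon : ∀ i, ∀ m ∈ Minf, ∀ j ∈ J i, ⟪a j, m⟫ = 0 := fun i m hm j _ =>
    haMinf j m hm
  -- the key identity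
  have hkeyid : ∀ i, ‖x (i + 1) - mh‖ ^ 2 = ⟪x 0 - mh, x (i + 1) - mh⟫ := by
    intro i
    have hwcon : ∀ j ∈ J i, ⟪a j, x (i + 1) - mh⟫ = 0 := by
      intro j hj
      rw [inner_sub_right, (hstep i).1 j hj, hMcon i mh hmhM j hj, sub_zero]
    have h1 : ⟪x 0 - x (i + 1), x (i + 1) - mh⟫ = 0 := hx0perp i _ hwcon
    have hre : x 0 - mh = (x 0 - x (i + 1)) + (x (i + 1) - mh) := by abel
    rw [hre, inner_add_left, h1, zero_add, real_inner_self_eq_norm_sq]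
  -- Fejér identity
  have hfejer : ∀ i, ∀ m ∈ Minf,
      ‖x (i + 1) - m‖ ^ 2 + ‖a i‖ ^ 2 + ‖xt i - x (i + 1)‖ ^ 2 = ‖x i - m‖ ^ 2 := by
    intro i m hm
    have h1 : ⟪a i, xt i - m⟫ = 0 :=
      haperp i _ (Submodule.sub_mem _ (hxtmem i) (hMle (l i) hm))
    have h2 : ⟪xt i - x (i + 1), x (i + 1) - m⟫ = 0 := by
      refine horth i _ ?_
      intro j hj
      rw [inner_sub_right, (hstep i).1 j hj, hMcon i m hm j hj, sub_zero]
    have e1 : x i - m = a i + (xt i - m) := by rw [ha i]; abel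
    have e2 : xt i - m = (xt i - x (i + 1)) + (x (i + 1) - m) := by abel
    have n1 := norm_add_sq_real (a i) (xt i - m)
    rw [h1] at n1
    have n2 := norm_add_sq_real (xt i - x (i + 1)) (x (i + 1) - m)
    rw [h2] at n2
    rw [e1, n1, e2, n2]
    ring
  have hmono : ∀ i, ‖x (i + 1) - mh‖ ≤ ‖x i - mh‖ := by
    intro i
    have := hfejer i mh hmhM
    nlinarith [norm_nonneg (x (i + 1) - mh), norm_nonneg (x i - mh),
      sq_nonneg ‖a i‖, sq_nonneg ‖xt i - x (i + 1)‖]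
  have hbd : ∀ i, ‖x i - mh‖ ≤ ‖x 0 - mh‖ := by
    intro i
    induction i with
    | zero => exact le_refl _
    | succ n ih => exact le_trans (hmono n) ih
  -- summability
  have hsumbd : ∀ n, ∑ i ∈ Finset.range n, (‖a i‖ ^ 2 + ‖xt i - x (i + 1)‖ ^ 2)
      ≤ ‖x 0 - mh‖ ^ 2 := by
    intro n
    have : ∑ i ∈ Finset.range n, (‖a i‖ ^ 2 + ‖xt i - x (i + 1)‖ ^ 2)
        = ∑ i ∈ Finset.range n, (‖x i - mh‖ ^ 2 - ‖x (i + 1) - mh‖ ^ 2) := by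
      refine Finset.sum_congr rfl fun i _ => ?_
      have := hfejer i mh hmhM
      linarith
    rw [this, Finset.sum_range_sub' (fun i => ‖x i - mh‖ ^ 2) n]
    nlinarith [sq_nonneg ‖x n - mh‖]
  have hsummable : Summable (fun i => ‖a i‖ ^ 2 + ‖xt i - x (i + 1)‖ ^ 2) :=
    summable_of_sum_range_le (fun i => by positivity) hsumbd
  have hterm : Tendsto (fun i => ‖a i‖ ^ 2 + ‖xt i - x (i + 1)‖ ^ 2) atTop (nhds 0) :=
    hsummable.tendsto_atTop_zero
  have ha2 : Tendsto (fun i => ‖a i‖ ^ 2) atTop (nhds 0) :=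
    squeeze_zero (fun i => sq_nonneg _) (fun i => le_add_of_nonneg_right (sq_nonneg _)) hterm
  have hq2 : Tendsto (fun i => ‖xt i - x (i + 1)‖ ^ 2) atTop (nhds 0) :=
    squeeze_zero (fun i => sq_nonneg _) (fun i => le_add_of_nonneg_left (sq_nonneg _)) hterm
  have sqrt0 : ∀ f : ℕ → X, Tendsto (fun i => ‖f i‖ ^ 2) atTop (nhds 0) →
      Tendsto (fun i => ‖f i‖) atTop (nhds 0) := by
    intro f hf
    have h1 : (fun i => ‖f i‖) = fun i => Real.sqrt (‖f i‖ ^ 2) :=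
      funext fun i => (Real.sqrt_sq (norm_nonneg _)).symm
    rw [h1]
    have := (Real.continuous_sqrt.tendsto 0).comp hf
    simpa [Function.comp_def] using this
  have ha0 : Tendsto (fun i => ‖a i‖) atTop (nhds 0) := sqrt0 a ha2
  have hq0 : Tendsto (fun i => ‖xt i - x (i + 1)‖) atTop (nhds 0) :=
    sqrt0 (fun i => xt i - x (i + 1)) hq2
  have hdx : Tendsto (fun i => ‖x (i + 1) - x i‖) atTop (nhds 0) := by
    have hb : ∀ i, ‖x (i + 1) - x i‖ ≤ ‖a i‖ + ‖xt i - x (i + 1)‖ := by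
      intro i
      have hre : x (i + 1) - x i = -(a i) - (xt i - x (i + 1)) := by rw [ha i]; abel
      rw [hre]
      calc ‖-(a i) - (xt i - x (i + 1))‖ ≤ ‖-(a i)‖ + ‖xt i - x (i + 1)‖ :=
            norm_sub_le _ _
        _ = ‖a i‖ + ‖xt i - x (i + 1)‖ := by rw [norm_neg]
    have := ha0.add hq0
    rw [add_zero] at this
    exact squeeze_zero (fun i => norm_nonneg _) hb this
  obtain ⟨pbar, hpbar⟩ := hA
  have hdistM : ∀ lidx, Tendsto (fun i => ‖x i - (Submodule.orthogonalProjectionOnto (M lidx) (x i) : X)‖)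
      atTop (nhds 0) := by
    intro lidx
    rw [Metric.tendsto_atTop]
    intro ε hε
    have hε2 : 0 < ε / 2 := by linarith
    have hε' : 0 < ε / (2 * (pbar + 1)) := by positivity
    obtain ⟨N1, hN1⟩ := (Metric.tendsto_atTop.1 ha0) (ε / 2) hε2
    obtain ⟨N2, hN2⟩ := (Metric.tendsto_atTop.1 hdx) (ε / (2 * (pbar + 1))) hε'
    refine ⟨max N1 N2 + 1, fun n hn => ?_⟩
    obtain ⟨p, hp, hlp⟩ := hpbar lidx n (by omega)
    have hxtm : xt (n + p) ∈ M lidx := hlp ▸ hxtmem (n + p)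
    have h1 : ‖x n - (Submodule.orthogonalProjectionOnto (M lidx) (x n) : X)‖ ≤ ‖x n - xt (n + p)‖ :=
      proj_min _ _ hxtm
    have h2 : ‖x n - xt (n + p)‖ ≤ ‖x n - x (n + p)‖ + ‖a (n + p)‖ := by
      have hre : x n - xt (n + p) = (x n - x (n + p)) + (x (n + p) - xt (n + p)) := by abel
      rw [hre, ← ha (n + p)]
      exact norm_add_le _ _
    have h3 : ‖x n - x (n + p)‖ ≤ ∑ q ∈ Finset.range p, ‖x (n + q + 1) - x (n + q)‖ := by
      have ht : x (n + p) - x n = ∑ q ∈ Finset.range p, (x (n + q + 1) - x (n + q)) :=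
        (Finset.sum_range_sub (fun q => x (n + q)) p).symm
      calc ‖x n - x (n + p)‖ = ‖x (n + p) - x n‖ := norm_sub_rev _ _
        _ = ‖∑ q ∈ Finset.range p, (x (n + q + 1) - x (n + q))‖ := by rw [ht]
        _ ≤ ∑ q ∈ Finset.range p, ‖x (n + q + 1) - x (n + q)‖ := norm_sum_le _ _
    have h4 : ∑ q ∈ Finset.range p, ‖x (n + q + 1) - x (n + q)‖
        ≤ (p : ℝ) * (ε / (2 * (pbar + 1))) := by
      have hb : ∀ q ∈ Finset.range p, ‖x (n + q + 1) - x (n + q)‖ ≤ ε / (2 * (pbar + 1)) := by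
        intro q _
        have hge : n + q ≥ N2 := by
          have : N2 ≤ max N1 N2 + 1 := by omega
          omega
        have := hN2 (n + q) hge
        rw [Real.dist_0_eq_abs, abs_of_nonneg (norm_nonneg _)] at this
        exact this.le
      calc ∑ q ∈ Finset.range p, ‖x (n + q + 1) - x (n + q)‖
          ≤ ∑ _q ∈ Finset.range p, (ε / (2 * (pbar + 1))) := Finset.sum_le_sum hb
        _ = (p : ℝ) * (ε / (2 * (pbar + 1))) := by
            rw [Finset.sum_const, Finset.card_range, nsmul_eq_mul]
    have h5 : ‖a (n + p)‖ < ε / 2 := by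
      have hge : n + p ≥ N1 := by
        have : N1 ≤ max N1 N2 + 1 := by omega
        omega
      have := hN1 (n + p) hge
      rwa [Real.dist_0_eq_abs, abs_of_nonneg (norm_nonneg _)] at this
    have h6 : (p : ℝ) * (ε / (2 * (pbar + 1))) ≤ ε / 2 := by
      have hple : (p : ℝ) ≤ (pbar : ℝ) := Nat.cast_le.mpr hp
      have hpb0 : (0:ℝ) ≤ (pbar : ℝ) := Nat.cast_nonneg _
      rw [← mul_div_assoc, div_le_div_iff₀ (by positivity) (by norm_num)]
      nlinarith
    rw [Real.dist_0_eq_abs, abs_of_nonneg (norm_nonneg _)]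
    calc ‖x n - (Submodule.orthogonalProjectionOnto (M lidx) (x n) : X)‖
        ≤ ‖x n - x (n + p)‖ + ‖a (n + p)‖ := le_trans h1 h2
      _ < (p : ℝ) * (ε / (2 * (pbar + 1))) + ε / 2 := by
          have := le_trans h3 h4
          linarith
      _ ≤ ε / 2 + ε / 2 := by linarith
      _ = ε := by ring
  -- weak-type convergence against vectors orthogonal to a single M lidx
  have hweak1 : ∀ lidx : Fin k, ∀ v ∈ (M lidx)ᗮ,
      Tendsto (fun i => ⟪v, x i - mh⟫) atTop (nhds 0) := by
    intro lidx v hv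
    have hb : ∀ i, |⟪v, x i - mh⟫|
        ≤ ‖v‖ * ‖x i - (Submodule.orthogonalProjectionOnto (M lidx) (x i) : X)‖ := by
      intro i
      have h0 : ⟪v, (Submodule.orthogonalProjectionOnto (M lidx) (x i) : X) - mh⟫ = 0 :=
        (Submodule.mem_orthogonal' _ _).1 hv _
          (Submodule.sub_mem _ (SetLike.coe_mem _) (hMle lidx hmhM))
      have hre : ⟪v, x i - mh⟫
          = ⟪v, x i - (Submodule.orthogonalProjectionOnto (M lidx) (x i) : X)⟫ := by
        have he : x i - mh = (x i - (Submodule.orthogonalProjectionOnto (M lidx) (x i) : X))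
            + ((Submodule.orthogonalProjectionOnto (M lidx) (x i) : X) - mh) := by abel
        rw [he, inner_add_right, h0, add_zero]
      rw [hre]
      exact abs_real_inner_le_norm _ _
    have hm := (hdistM lidx).const_mul ‖v‖
    rw [mul_zero] at hm
    rw [tendsto_zero_iff_abs_tendsto_zero]
    exact squeeze_zero (fun i => abs_nonneg _) hb hm
  -- extend to the supremum of the orthogonal complements
  have hweakN : ∀ v ∈ (⨆ lidx, (M lidx)ᗮ : Submodule ℝ X),
      Tendsto (fun i => ⟪v, x i - mh⟫) atTop (nhds 0) := by
    intro v hv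
    refine Submodule.iSup_induction (motive := fun v =>
      Tendsto (fun i => ⟪v, x i - mh⟫) atTop (nhds 0)) _ hv
      (fun lidx w hw => hweak1 lidx w hw) ?_ ?_
    · simpa using (tendsto_const_nhds :
        Tendsto (fun _ : ℕ => (0:ℝ)) atTop (nhds 0))
    · intro u w hu hw
      have := hu.add hw
      rw [add_zero] at this
      simpa [inner_add_left] using this
  -- identification of the orthogonal complement with the closure
  have hMinfperp : Minfᗮ = (⨆ lidx, (M lidx)ᗮ : Submodule ℝ X).topologicalClosure := by
    have h1 : Minf = (⨆ lidx, (M lidx)ᗮ : Submodule ℝ X)ᗮ := by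
      rw [hMinf, ← Submodule.iInf_orthogonal]
      exact iInf_congr fun lidx => (Submodule.orthogonal_orthogonal (M lidx)).symm
    rw [h1, Submodule.orthogonal_orthogonal_eq_closure]
  -- convergence against x 0 - mh
  have hweakC : Tendsto (fun i => ⟪x 0 - mh, x i - mh⟫) atTop (nhds 0) := by
    have hv : x 0 - mh ∈ Minfᗮ := Submodule.sub_starProjection_mem_orthogonal (x 0)
    rw [hMinfperp] at hv
    have hvc : x 0 - mh ∈ closure ((⨆ lidx, (M lidx)ᗮ : Submodule ℝ X) : Set X) := by
      rwa [← Submodule.topologicalClosure_coe]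
    rw [Metric.tendsto_atTop]
    intro ε hε
    set C : ℝ := ‖x 0 - mh‖ + 1 with hC
    have hCpos : 0 < C := by positivity
    obtain ⟨w, hwmem, hwd⟩ := Metric.mem_closure_iff.1 hvc (ε / (2 * C)) (by positivity)
    obtain ⟨N1, hN1⟩ := Metric.tendsto_atTop.1 (hweakN w hwmem) (ε / 2) (by linarith)
    refine ⟨N1, fun n hn => ?_⟩
    have h1 := hN1 n hn
    rw [Real.dist_0_eq_abs] at h1 ⊢
    have hsplit : ⟪x 0 - mh, x n - mh⟫
        = ⟪x 0 - mh - w, x n - mh⟫ + ⟪w, x n - mh⟫ := by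
      rw [← inner_add_left, sub_add_cancel]
    have h2 : |⟪x 0 - mh - w, x n - mh⟫| ≤ ‖x 0 - mh - w‖ * ‖x n - mh‖ :=
      abs_real_inner_le_norm _ _
    have h3 : ‖x 0 - mh - w‖ < ε / (2 * C) := by
      have := hwd
      rwa [dist_eq_norm] at this
    have h4 : ‖x n - mh‖ ≤ C := le_trans (hbd n) (by rw [hC]; linarith)
    calc |⟪x 0 - mh, x n - mh⟫|
        ≤ |⟪x 0 - mh - w, x n - mh⟫| + |⟪w, x n - mh⟫| := by
          rw [hsplit]; exact abs_add_le _ _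
      _ < ε / (2 * C) * C + ε / 2 := by
          have h5 : |⟪x 0 - mh - w, x n - mh⟫| ≤ ‖x 0 - mh - w‖ * C :=
            le_trans h2 (mul_le_mul_of_nonneg_left h4 (norm_nonneg _))
          have h6 : ‖x 0 - mh - w‖ * C < ε / (2 * C) * C :=
            mul_lt_mul_of_pos_right h3 hCpos
          have h7 : |⟪x 0 - mh - w, x n - mh⟫| < ε / (2 * C) * C := lt_of_le_of_lt h5 h6
          exact add_lt_add h7 h1
      _ = ε := by field_simp; ring
  -- conclusion
  have hfin2 : Tendsto (fun i => ‖x (i + 1) - mh‖ ^ 2) atTop (nhds 0) := by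
    have h1 : (fun i => ‖x (i + 1) - mh‖ ^ 2)
        = fun i => ⟪x 0 - mh, x (i + 1) - mh⟫ := funext fun i => hkeyid i
    rw [h1]
    exact hweakC.comp (tendsto_add_atTop_nat 1)
  have hfin1 : Tendsto (fun i => ‖x (i + 1) - mh‖) atTop (nhds 0) :=
    sqrt0 (fun i => x (i + 1) - mh) hfin2
  have hfin : Tendsto (fun i => x (i + 1)) atTop (nhds mh) :=
    tendsto_iff_norm_sub_tendsto_zero.2 hfin1
  exact (tendsto_add_atTop_iff_nat 1).1 hfin
end

section
/- Consider Algorithm 1 (Accelerated Projections): let M_1,...,M_k be closed linear subspaces of a real Hilbert space X, M := ⋂_{l=1}^k M_l, and x_0 ∈ X. For each i ≥ 0 choose l_i ∈ {1,...,k}, set x̃_i := P_{M_{l_i}}(x_i), a_i := x_i − x̃_i, and H_i := {x ∈ X : ⟨a_i, x⟩ = 0}; choose J_i ⊆ {0,1,...,i} with i ∈ J_i, set H̃_i := ⋂_{j∈J_i} H_j, and x_{i+1} := P_{H̃_i}(x̃_i). Suppose additionally: (A) there is an integer p̄ ≥ 0 such that for every l ∈ {1,...,k} and every i > 0 there is an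 integer p_i^l ∈ [0, p̄] with l_{i+p_i^l} = l; and (B′) there exist vectors ṽ_{i,l} ∈ M_l^⊥ and v_{i,l} ∈ M_l^⊥ (for all i ≥ 0 and l ∈ {1,...,k}) with x_i − x̃_i = ∑_{l=1}^k ṽ_{i,l} and x̃_i − x_{i+1} = ∑_{l=1}^k v_{i,l}, and a constant K such that ∑_{l=1}^k (‖ṽ_{i,l}‖² + ‖v_{i,l}‖²) ≤ K (‖x_i − x̃_i‖² + ‖x̃_i − x_{i+1}‖²) for all i ≥ 0. Then the sequence {x_i} converges strongly to P_M(x_0). -/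
open Filter
open scoped RealInnerProductSpace


private lemma aux_inner_eq_zero {X : Type*} [NormedAddCommGroup X] [InnerProductSpace ℝ X]
    (w h : X) (hmin : ∀ t : ℝ, ‖w‖ ≤ ‖w - t • h‖) : ⟪w, h⟫ = 0 := by
  by_cases hh : h = 0
  · simp [hh]
  · have hh2 : (0:ℝ) < ‖h‖ ^ 2 := by
      have := norm_pos_iff.2 hh; positivity
    set c : ℝ := ⟪w, h⟫ with hc
    set t : ℝ := c / ‖h‖ ^ 2 with ht
    have h1 := hmin t
    have h2 : ‖w‖ ^ 2 ≤ ‖w - t • h‖ ^ 2 := by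
      nlinarith [norm_nonneg w, norm_nonneg (w - t • h)]
    have h3 : ‖w - t • h‖ ^ 2 = ‖w‖ ^ 2 - 2 * (t * c) + t ^ 2 * ‖h‖ ^ 2 := by
      rw [norm_sub_sq_real, real_inner_smul_right, norm_smul]
      simp [mul_pow]
      exact Or.inl hc.symm
    rw [h3] at h2
    have h4 : t * c = c ^ 2 / ‖h‖ ^ 2 := by rw [ht]; ring
    have h5 : t ^ 2 * ‖h‖ ^ 2 = c ^ 2 / ‖h‖ ^ 2 := by rw [ht]; field_simp
    rw [h4, h5] at h2
    have h6 : c ^ 2 / ‖h‖ ^ 2 ≤ 0 := by linarith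
    have h7 : c ^ 2 ≤ 0 := by
      by_contra hcon
      push_neg at hcon
      have := div_pos hcon hh2
      linarith
    have : c ^ 2 = 0 := le_antisymm h7 (sq_nonneg c)
    exact pow_eq_zero_iff (by norm_num) |>.1 this

private lemma aux_le_of_sq_le_sq {x y : ℝ} (hx : 0 ≤ x) (hy : 0 ≤ y) (h : x ^ 2 ≤ y ^ 2) :
    x ≤ y := by nlinarith

private lemma aux_analytic (b : ℕ → ℝ) (hb : ∀ n, 0 ≤ b n) (B : ℝ)
    (hB : ∀ N, ∑ n ∈ Finset.range N, b n ≤ B) (P : ℕ) (hP : 0 < P)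
    (δ : ℝ) (hδ : 0 < δ) (N : ℕ) :
    ∃ j, N ≤ j ∧ (∑ q ∈ Finset.range P, b (j + q)) *
      (∑ n ∈ Finset.range j, Real.sqrt (b n)) ^ 2 < δ := by
  classical
  by_contra hcon
  push_neg at hcon
  set S : ℕ → ℝ := fun j => ∑ n ∈ Finset.range j, Real.sqrt (b n) with hS
  have hB0 : 0 ≤ B := by simpa using hB 0
  have hSnn : ∀ j, 0 ≤ S j := fun j => Finset.sum_nonneg fun n _ => Real.sqrt_nonneg _
  set C : ℝ := S N + Real.sqrt (P * B) + 1 with hC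
  have hCpos : (0:ℝ) < C := by
    have := hSnn N; have := Real.sqrt_nonneg ((P:ℝ) * B); linarith
  have claim1 : ∀ r : ℕ, S (N + r * P) ≤ C * Real.sqrt ((r:ℝ) + 1) := by
    intro r
    have hsplit : S (N + r * P) = S N + ∑ m ∈ Finset.range (r*P), Real.sqrt (b (N + m)) :=
      Finset.sum_range_add (fun n => Real.sqrt (b n)) N (r*P)
    set T : ℝ := ∑ m ∈ Finset.range (r*P), Real.sqrt (b (N + m)) with hTdef
    have hTnn : 0 ≤ T := Finset.sum_nonneg fun n _ => Real.sqrt_nonneg _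
    have hT2 : T ^ 2 ≤ ((r*P : ℕ) : ℝ) * B := by
      have hcs := Finset.sum_mul_sq_le_sq_mul_sq (Finset.range (r*P)) (fun _ => (1:ℝ))
        (fun m => Real.sqrt (b (N + m)))
      simp only [one_mul, one_pow] at hcs
      have hsq : ∀ m ∈ Finset.range (r*P), Real.sqrt (b (N + m)) ^ 2 = b (N + m) :=
        fun m _ => Real.sq_sqrt (hb _)
      rw [Finset.sum_congr rfl hsq] at hcs
      have hbb : ∑ m ∈ Finset.range (r*P), b (N + m) ≤ B := by
        have h1 := hB (N + r*P)
        rw [Finset.sum_range_add] at h1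
        have h2 : 0 ≤ ∑ n ∈ Finset.range N, b n := Finset.sum_nonneg fun n _ => hb n
        linarith
      have hcard : ∑ _m ∈ Finset.range (r*P), (1:ℝ) = ((r*P : ℕ) : ℝ) := by simp
      rw [hcard] at hcs
      calc T ^ 2 ≤ ((r*P : ℕ) : ℝ) * ∑ m ∈ Finset.range (r*P), b (N + m) := hcs
        _ ≤ ((r*P : ℕ) : ℝ) * B := by
            apply mul_le_mul_of_nonneg_left hbb; positivity
    have hT : T ≤ Real.sqrt (((r*P : ℕ) : ℝ) * B) := by
      calc T = Real.sqrt (T ^ 2) := (Real.sqrt_sq hTnn).symm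
        _ ≤ _ := Real.sqrt_le_sqrt hT2
    have hs2 : Real.sqrt (((r*P : ℕ) : ℝ) * B) ≤ Real.sqrt ((P:ℝ) * B) * Real.sqrt ((r:ℝ)+1) := by
      have h1 : ((r*P : ℕ) : ℝ) * B = ((P:ℝ) * B) * (r:ℝ) := by push_cast; ring
      rw [h1, Real.sqrt_mul (by positivity)]
      apply mul_le_mul_of_nonneg_left _ (Real.sqrt_nonneg _)
      exact Real.sqrt_le_sqrt (by linarith)
    have hr1 : (1:ℝ) ≤ Real.sqrt ((r:ℝ)+1) := by
      nlinarith [Real.sq_sqrt (show (0:ℝ) ≤ (r:ℝ)+1 by positivity),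
        Real.sqrt_nonneg ((r:ℝ)+1), (Nat.cast_nonneg r : (0:ℝ) ≤ r)]
    have := hSnn N
    have := Real.sqrt_nonneg ((P:ℝ) * B)
    rw [hsplit]
    rw [hC]
    nlinarith [hT.trans hs2]
  have claim2 : ∀ R : ℕ, ∑ r ∈ Finset.range R, (∑ q ∈ Finset.range P, b (N + r * P + q)) ≤ B := by
    intro R
    have key : ∀ R : ℕ, ∑ r ∈ Finset.range R, (∑ q ∈ Finset.range P, b (N + r * P + q)) =
        ∑ m ∈ Finset.range (R * P), b (N + m) := by
      intro R
      induction R with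
      | zero => simp
      | succ R ih =>
        rw [Finset.sum_range_succ, ih, Nat.succ_mul, Finset.sum_range_add]
        congr 1
        apply Finset.sum_congr rfl
        intro q _
        congr 1
        omega
    rw [key]
    have h1 := hB (N + R * P)
    rw [Finset.sum_range_add] at h1
    have h2 : 0 ≤ ∑ n ∈ Finset.range N, b n := Finset.sum_nonneg fun n _ => hb n
    linarith
  have hlow : ∀ r : ℕ, δ / C ^ 2 * (1/((r:ℝ)+1)) ≤ ∑ q ∈ Finset.range P, b (N + r * P + q) := by
    intro r
    have hfrom := hcon (N + r * P) (Nat.le_add_right _ _)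
    have hennn : 0 ≤ ∑ q ∈ Finset.range P, b (N + r * P + q) := Finset.sum_nonneg fun q _ => hb _
    have hS2 : S (N + r * P) ^ 2 ≤ C ^ 2 * ((r:ℝ)+1) := by
      have h1 : S (N + r * P) ^ 2 ≤ (C * Real.sqrt ((r:ℝ)+1)) ^ 2 :=
        pow_le_pow_left₀ (hSnn _) (claim1 r) 2
      rw [mul_pow, Real.sq_sqrt (by positivity : (0:ℝ) ≤ (r:ℝ)+1)] at h1
      exact h1
    have hδle : δ ≤ (∑ q ∈ Finset.range P, b (N + r * P + q)) * (C ^ 2 * ((r:ℝ)+1)) :=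
      hfrom.trans (mul_le_mul_of_nonneg_left hS2 hennn)
    have hr1 : (0:ℝ) < (r:ℝ) + 1 := by positivity
    have hc2 : (0:ℝ) < C ^ 2 := by positivity
    rw [div_mul_eq_mul_div, mul_one_div, div_div, div_le_iff₀ (by positivity)]
    linarith [hδle]
  have hsum : ∀ R : ℕ, δ / C ^ 2 * (∑ r ∈ Finset.range R, 1/((r:ℝ)+1)) ≤ B := by
    intro R
    rw [Finset.mul_sum]
    calc ∑ r ∈ Finset.range R, δ / C ^ 2 * (1/((r:ℝ)+1))
        ≤ ∑ r ∈ Finset.range R, (∑ q ∈ Finset.range P, b (N + r * P + q)) :=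
          Finset.sum_le_sum fun r _ => hlow r
      _ ≤ B := claim2 R
  have hdiv := Real.tendsto_sum_range_one_div_nat_succ_atTop
  have hc2 : (0:ℝ) < C ^ 2 := by positivity
  obtain ⟨R, hR⟩ := (tendsto_atTop.1 hdiv ((B+1) * (C^2/δ))).exists
  have h1 := hsum R
  have h2 : δ / C ^ 2 * ((B+1) * (C^2/δ)) ≤ δ / C ^ 2 * (∑ r ∈ Finset.range R, 1/((r:ℝ)+1)) := by
    apply mul_le_mul_of_nonneg_left _ (by positivity)
    simpa using hR
  have h3 : δ / C ^ 2 * ((B+1) * (C^2/δ)) = B + 1 := by field_simp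
  linarith

set_option maxHeartbeats 1000000 in
/-- Strong convergence of Algorithm 1, Version 2: in Algorithm 1
(`x̃_i = P_{M_{l_i}} x_i`, `a_i = x_i - x̃_i`, `H_i = {x : ⟪a_i, x⟫ = 0}`,
`i ∈ J_i ⊆ {0,…,i}`, `H̃_i = ⋂_{j ∈ J_i} H_j`, `x_{i+1} = P_{H̃_i}(x̃_i)`),
assume (A) there is `p̄` such that for every `l` and every `i > 0` there is
`p_i^l ∈ [0, p̄]` with `l_{i+p_i^l} = l`, and (B′) there are decompositions
`x_i - x̃_i = ∑_l ṽ_{i,l}` and `x̃_i - x_{i+1} = ∑_l v_{i,l}` with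
`ṽ_{i,l}, v_{i,l} ∈ (M l)ᗮ` and a constant `K` with
`∑_l (‖ṽ_{i,l}‖² + ‖v_{i,l}‖²) ≤ K (‖x_i - x̃_i‖² + ‖x̃_i - x_{i+1}‖²)` for
all `i`.  Then `x_i → P_M(x_0)` strongly, where `M = ⨅ l, M l`. -/
theorem algorithm1_strong_convergence_version2
    {X : Type*} [NormedAddCommGroup X] [InnerProductSpace ℝ X] [CompleteSpace X]
    {k : ℕ} (M : Fin k → Submodule ℝ X) [∀ l, CompleteSpace (M l)]
    [CompleteSpace (⨅ l, M l : Submodule ℝ X)]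
    (l : ℕ → Fin k) (x xt a : ℕ → X) (J : ℕ → Finset ℕ)
    (hxt : ∀ i, xt i = (Submodule.orthogonalProjectionOnto (M (l i)) (x i) : X))
    (ha : ∀ i, a i = x i - xt i)
    (hJ : ∀ i, i ∈ J i ∧ ∀ j ∈ J i, j ≤ i)
    -- `x_{i+1}` is the orthogonal projection of `x̃_i` onto
    -- `H̃_i = ⋂_{j ∈ J_i} {y : ⟪a_j, y⟫ = 0}`:
    (hstep : ∀ i,
      (∀ j ∈ J i, ⟪a j, x (i + 1)⟫ = 0) ∧
      ∀ y : X, (∀ j ∈ J i, ⟪a j, y⟫ = 0) → ‖xt i - x (i + 1)‖ ≤ ‖xt i - y‖)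
    -- condition (A):
    (hA : ∃ pbar : ℕ, ∀ lidx : Fin k, ∀ i, 0 < i →
      ∃ p ≤ pbar, l (i + p) = lidx)
    -- condition (B′):
    (hB' : ∃ (vt v : ℕ → Fin k → X) (K : ℝ),
      (∀ i lidx, vt i lidx ∈ (M lidx)ᗮ ∧ v i lidx ∈ (M lidx)ᗮ) ∧
      (∀ i, x i - xt i = ∑ lidx, vt i lidx) ∧
      (∀ i, xt i - x (i + 1) = ∑ lidx, v i lidx) ∧
      (∀ i, ∑ lidx, (‖vt i lidx‖ ^ 2 + ‖v i lidx‖ ^ 2) ≤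
        K * (‖x i - xt i‖ ^ 2 + ‖xt i - x (i + 1)‖ ^ 2))) :
    Tendsto x atTop
      (nhds (Submodule.orthogonalProjectionOnto (⨅ l, M l : Submodule ℝ X) (x 0) : X)) := by
  classical
  obtain ⟨pbar, hA⟩ := hA
  obtain ⟨vt, v, K, hperp, hdec1, hdec2, hKb⟩ := hB'
  set M' : Submodule ℝ X := ⨅ l, M l with hM'
  set m : X := (Submodule.orthogonalProjectionOnto M' (x 0) : X) with hmdef
  have hM'le : ∀ lidx, M' ≤ M lidx := fun lidx => iInf_le M lidx
  have hmM' : m ∈ M' := SetLike.coe_mem _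
  have hmMl : ∀ lidx, m ∈ M lidx := fun lidx => hM'le lidx hmM'
  set b : ℕ → ℝ := fun n => ‖x n - xt n‖ ^ 2 + ‖xt n - x (n+1)‖ ^ 2 with hbdef
  have hbnn : ∀ n, 0 ≤ b n := fun n => by simp only [hbdef]; positivity
  set s : ℕ → ℝ := fun n => Real.sqrt (b n) with hsdef
  have hsnn : ∀ n, 0 ≤ s n := fun n => Real.sqrt_nonneg _
  set w : ℕ → Fin k → X := fun n lidx => vt n lidx + v n lidx with hwdef
  -- basic orthogonality facts
  have hxtmem : ∀ i, xt i ∈ M (l i) := fun i => by rw [hxt i]; exact SetLike.coe_mem _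
  have haperp : ∀ i, a i ∈ (M (l i))ᗮ := fun i => by
    rw [ha i, hxt i]; exact Submodule.sub_starProjection_mem_orthogonal _
  have hinner_a : ∀ i, ∀ y ∈ M (l i), ⟪a i, y⟫ = 0 := fun i y hy =>
    (Submodule.mem_orthogonal' _ _).1 (haperp i) y hy
  -- the key Pythagoras identity
  have hkey : ∀ i, ‖x i - m‖ ^ 2 = ‖x (i+1) - m‖ ^ 2 + b i := by
    intro i
    have h1 : ⟪x i - xt i, xt i - m⟫ = 0 := by
      rw [← ha i]
      exact hinner_a i _ (Submodule.sub_mem _ (hxtmem i) (hmMl (l i)))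
    have hP1 : ‖x i - m‖ ^ 2 = ‖x i - xt i‖ ^ 2 + ‖xt i - m‖ ^ 2 := by
      have hsplit : x i - m = (x i - xt i) + (xt i - m) := by abel
      rw [hsplit, norm_add_sq_real, h1]; ring
    have horth2 : ∀ h : X, (∀ j ∈ J i, ⟪a j, h⟫ = 0) → ⟪xt i - x (i+1), h⟫ = 0 := by
      intro h hh
      apply aux_inner_eq_zero
      intro t
      have hy : ∀ j ∈ J i, ⟪a j, x (i+1) + t • h⟫ = 0 := by
        intro j hj
        rw [inner_add_right, real_inner_smul_right, (hstep i).1 j hj, hh j hj]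
        ring
      have hmin := (hstep i).2 (x (i+1) + t • h) hy
      calc ‖xt i - x (i+1)‖ ≤ ‖xt i - (x (i+1) + t • h)‖ := hmin
        _ = ‖xt i - x (i+1) - t • h‖ := by rw [sub_add_eq_sub_sub]
    have h2 : ⟪xt i - x (i+1), x (i+1) - m⟫ = 0 := by
      apply horth2
      intro j hj
      rw [inner_sub_right, (hstep i).1 j hj, hinner_a j m (hmMl (l j))]; ring
    have hP2 : ‖xt i - m‖ ^ 2 = ‖xt i - x (i+1)‖ ^ 2 + ‖x (i+1) - m‖ ^ 2 := by
      have hsplit : xt i - m = (xt i - x (i+1)) + (x (i+1) - m) := by abel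
      rw [hsplit, norm_add_sq_real, h2]; ring
    rw [hP1, hP2]; simp only [hbdef]; ring
  have hmono : Antitone (fun j => ‖x j - m‖ ^ 2) := by
    apply antitone_nat_of_succ_le
    intro n
    have := hbnn n
    rw [hkey n]
    linarith
  have hsum_b : ∀ N, ∑ n ∈ Finset.range N, b n ≤ ‖x 0 - m‖ ^ 2 := by
    have haux : ∀ N, ∑ n ∈ Finset.range N, b n = ‖x 0 - m‖ ^ 2 - ‖x N - m‖ ^ 2 := by
      intro N
      induction N with
      | zero => simp
      | succ n ih => rw [Finset.sum_range_succ, ih, hkey n]; ring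
    intro N
    rw [haux N]
    have : (0:ℝ) ≤ ‖x N - m‖ ^ 2 := by positivity
    linarith
  have hbdd : BddBelow (Set.range fun j => ‖x j - m‖ ^ 2) := by
    refine ⟨0, ?_⟩
    rintro _ ⟨j, rfl⟩
    positivity
  set L : ℝ := ⨅ j, ‖x j - m‖ ^ 2 with hLdef
  have hLtend : Tendsto (fun j => ‖x j - m‖ ^ 2) atTop (nhds L) := tendsto_atTop_ciInf hmono hbdd
  have hLle : ∀ j, L ≤ ‖x j - m‖ ^ 2 := fun j => ciInf_le hbdd j
  -- condition B' consequences
  set K₀ : ℝ := max K 0 with hK0def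
  have hK0nn : 0 ≤ K₀ := le_max_right _ _
  have hK0 : ∀ i, ∑ lidx, (‖vt i lidx‖ ^ 2 + ‖v i lidx‖ ^ 2) ≤ K₀ * b i := fun i =>
    (hKb i).trans (mul_le_mul_of_nonneg_right (le_max_left _ _) (hbnn i))
  have hΔ : ∀ n, x n - x (n+1) = ∑ lidx, w n lidx := by
    intro n
    have hsplit : x n - x (n+1) = (x n - xt n) + (xt n - x (n+1)) := by abel
    rw [hsplit, hdec1 n, hdec2 n, ← Finset.sum_add_distrib]
  obtain ⟨c2, hc2nn, hc2sq⟩ : ∃ c : ℝ, 0 ≤ c ∧ c ^ 2 = 2 * (k:ℝ) * K₀ :=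
    ⟨Real.sqrt (2 * (k:ℝ) * K₀), Real.sqrt_nonneg _,
      Real.sq_sqrt (mul_nonneg (mul_nonneg (by norm_num) (Nat.cast_nonneg k)) hK0nn)⟩
  have hσ : ∀ n, ∑ lidx, ‖w n lidx‖ ≤ c2 * s n := by
    intro n
    have h1 : ∀ lidx : Fin k, ‖w n lidx‖ ^ 2 ≤ 2 * (‖vt n lidx‖ ^ 2 + ‖v n lidx‖ ^ 2) := by
      intro lidx
      have h0 : ‖w n lidx‖ ≤ ‖vt n lidx‖ + ‖v n lidx‖ := norm_add_le _ _
      nlinarith [norm_nonneg (vt n lidx), norm_nonneg (v n lidx), norm_nonneg (w n lidx),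
        sq_nonneg (‖vt n lidx‖ - ‖v n lidx‖)]
    have h2 : ∑ lidx, ‖w n lidx‖ ^ 2 ≤ 2 * K₀ * b n := by
      calc ∑ lidx, ‖w n lidx‖ ^ 2
          ≤ ∑ lidx, 2 * (‖vt n lidx‖ ^ 2 + ‖v n lidx‖ ^ 2) :=
            Finset.sum_le_sum (fun i _ => h1 i)
        _ = 2 * ∑ lidx, (‖vt n lidx‖ ^ 2 + ‖v n lidx‖ ^ 2) := by rw [Finset.mul_sum]
        _ ≤ 2 * (K₀ * b n) := by linarith [hK0 n]
        _ = 2 * K₀ * b n := by ring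
    have hcs := Finset.sum_mul_sq_le_sq_mul_sq Finset.univ (fun _ : Fin k => (1:ℝ))
      (fun lidx => ‖w n lidx‖)
    simp only [one_mul, one_pow] at hcs
    have hcard : ∑ _lidx : Fin k, (1:ℝ) = (k:ℝ) := by simp
    rw [hcard] at hcs
    apply aux_le_of_sq_le_sq (Finset.sum_nonneg fun i _ => norm_nonneg _)
      (by positivity)
    have hsq : s n ^ 2 = b n := Real.sq_sqrt (hbnn n)
    have hc2sq' : (c2 * s n) ^ 2 = 2 * (k:ℝ) * K₀ * b n := by
      rw [mul_pow, hc2sq, hsq]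
    rw [hc2sq']
    calc (∑ lidx, ‖w n lidx‖) ^ 2 ≤ (k:ℝ) * ∑ lidx, ‖w n lidx‖ ^ 2 := hcs
      _ ≤ (k:ℝ) * (2 * K₀ * b n) := by
          apply mul_le_mul_of_nonneg_left h2 (by positivity)
      _ = 2 * (k:ℝ) * K₀ * b n := by ring
  -- the ε estimate from condition (A)
  set e : ℕ → ℝ := fun j => ∑ q ∈ Finset.range (pbar+1), b (j + q) with hedef
  have henn : ∀ j, 0 ≤ e j := fun j => Finset.sum_nonneg fun q _ => hbnn _
  obtain ⟨C1, hC1nn, hC1sq⟩ : ∃ c : ℝ, 0 ≤ c ∧ c ^ 2 = 2 * ((pbar:ℝ)+1) :=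
    ⟨Real.sqrt (2 * ((pbar:ℝ)+1)), Real.sqrt_nonneg _, Real.sq_sqrt (by positivity)⟩
  have hE : ∀ j, 1 ≤ j → ∀ lidx, ∃ u ∈ M lidx, ‖x j - u‖ ≤ C1 * Real.sqrt (e j) := by
    intro j hj lidx
    obtain ⟨p, hp, hlp⟩ := hA lidx j hj
    refine ⟨xt (j+p), hlp ▸ hxtmem (j+p), ?_⟩
    have htel : ∀ pp : ℕ, x j - x (j+pp) = ∑ q ∈ Finset.range pp, (x (j+q) - x (j+q+1)) := by
      intro pp
      induction pp with
      | zero => simp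
      | succ pp ih =>
        rw [Finset.sum_range_succ, ← ih]
        have : j + (pp+1) = (j + pp) + 1 := rfl
        rw [this]
        abel
    have hnorm1 : ‖x j - xt (j+p)‖ ≤
        ∑ q ∈ Finset.range (p+1), (‖x (j+q) - xt (j+q)‖ + ‖xt (j+q) - x (j+q+1)‖) := by
      have hsplit : x j - xt (j+p) =
          (∑ q ∈ Finset.range p, (x (j+q) - x (j+q+1))) + (x (j+p) - xt (j+p)) := by
        rw [← htel p]; abel
      rw [hsplit, Finset.sum_range_succ]
      refine (norm_add_le _ _).trans (add_le_add ?_ ?_)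
      · refine (norm_sum_le _ _).trans (Finset.sum_le_sum ?_)
        intro q _
        have hsp : x (j+q) - x (j+q+1) = (x (j+q) - xt (j+q)) + (xt (j+q) - x (j+q+1)) := by abel
        rw [hsp]
        exact norm_add_le _ _
      · exact le_add_of_nonneg_right (norm_nonneg _)
    have hg : ∀ n, (‖x n - xt n‖ + ‖xt n - x (n+1)‖) ^ 2 ≤ 2 * b n := by
      intro n
      simp only [hbdef]
      nlinarith [sq_nonneg (‖x n - xt n‖ - ‖xt n - x (n+1)‖)]
    have hgnn : ∀ n, 0 ≤ ‖x n - xt n‖ + ‖xt n - x (n+1)‖ := fun n => by positivity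
    have hcs := Finset.sum_mul_sq_le_sq_mul_sq (Finset.range (p+1)) (fun _ => (1:ℝ))
      (fun q => ‖x (j+q) - xt (j+q)‖ + ‖xt (j+q) - x (j+q+1)‖)
    simp only [one_mul, one_pow] at hcs
    have hcard : ∑ _q ∈ Finset.range (p+1), (1:ℝ) = ((p:ℝ)+1) := by simp
    rw [hcard] at hcs
    have hsum1 : ∑ q ∈ Finset.range (p+1), (‖x (j+q) - xt (j+q)‖ + ‖xt (j+q) - x (j+q+1)‖) ^ 2
        ≤ 2 * e j := by
      calc ∑ q ∈ Finset.range (p+1), (‖x (j+q) - xt (j+q)‖ + ‖xt (j+q) - x (j+q+1)‖) ^ 2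
          ≤ ∑ q ∈ Finset.range (p+1), 2 * b (j+q) := Finset.sum_le_sum fun q _ => hg (j+q)
        _ = 2 * ∑ q ∈ Finset.range (p+1), b (j+q) := by rw [Finset.mul_sum]
        _ ≤ 2 * e j := by
            have hsub : ∑ q ∈ Finset.range (p+1), b (j+q) ≤ e j := by
              simp only [hedef]
              apply Finset.sum_le_sum_of_subset_of_nonneg
              · exact Finset.range_subset_range.2 (by omega)
              · intro q _ _; exact hbnn _
            linarith
    have hfin : (∑ q ∈ Finset.range (p+1), (‖x (j+q) - xt (j+q)‖ + ‖xt (j+q) - x (j+q+1)‖)) ^ 2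
        ≤ (C1 * Real.sqrt (e j)) ^ 2 := by
      have hC1sq' : (C1 * Real.sqrt (e j)) ^ 2 = 2 * ((pbar:ℝ)+1) * e j := by
        rw [mul_pow, hC1sq, Real.sq_sqrt (henn j)]
      rw [hC1sq']
      calc (∑ q ∈ Finset.range (p+1), (‖x (j+q) - xt (j+q)‖ + ‖xt (j+q) - x (j+q+1)‖)) ^ 2
          ≤ ((p:ℝ)+1) * ∑ q ∈ Finset.range (p+1),
              (‖x (j+q) - xt (j+q)‖ + ‖xt (j+q) - x (j+q+1)‖) ^ 2 := hcs
        _ ≤ ((p:ℝ)+1) * (2 * e j) := by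
            apply mul_le_mul_of_nonneg_left hsum1 (by positivity)
        _ ≤ 2 * ((pbar:ℝ)+1) * e j := by
            have hple : (p:ℝ) + 1 ≤ (pbar:ℝ) + 1 := by
              have := (Nat.cast_le (α := ℝ)).2 hp; linarith
            nlinarith [henn j]
    calc ‖x j - xt (j+p)‖
        ≤ ∑ q ∈ Finset.range (p+1), (‖x (j+q) - xt (j+q)‖ + ‖xt (j+q) - x (j+q+1)‖) := hnorm1
      _ ≤ C1 * Real.sqrt (e j) :=
          aux_le_of_sq_le_sq (Finset.sum_nonneg fun q _ => hgnn _)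
            (mul_nonneg hC1nn (Real.sqrt_nonneg _)) hfin
  -- the inner product estimate
  have hF : ∀ j, 1 ≤ j → ∀ n, |⟪x j - m, x n - x (n+1)⟫| ≤ C1 * c2 * (Real.sqrt (e j) * s n) := by
    intro j hj n
    rw [hΔ n, inner_sum]
    refine (Finset.abs_sum_le_sum_abs _ _).trans ?_
    have hterm : ∀ lidx : Fin k, |⟪x j - m, w n lidx⟫| ≤ (C1 * Real.sqrt (e j)) * ‖w n lidx‖ := by
      intro lidx
      obtain ⟨u, hu, hu2⟩ := hE j hj lidx
      have hw : w n lidx ∈ (M lidx)ᗮ := by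
        simp only [hwdef]
        exact Submodule.add_mem _ (hperp n lidx).1 (hperp n lidx).2
      have hz : ⟪u - m, w n lidx⟫ = 0 :=
        (Submodule.mem_orthogonal _ _).1 hw _ (Submodule.sub_mem _ hu (hmMl lidx))
      have hsplit : x j - m = (x j - u) + (u - m) := by abel
      rw [hsplit, inner_add_left, hz, add_zero]
      calc |⟪x j - u, w n lidx⟫| ≤ ‖x j - u‖ * ‖w n lidx‖ := abs_real_inner_le_norm _ _
        _ ≤ (C1 * Real.sqrt (e j)) * ‖w n lidx‖ :=
            mul_le_mul_of_nonneg_right hu2 (norm_nonneg _)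
    calc ∑ lidx, |⟪x j - m, w n lidx⟫|
        ≤ ∑ lidx, (C1 * Real.sqrt (e j)) * ‖w n lidx‖ :=
          Finset.sum_le_sum fun i _ => hterm i
      _ = (C1 * Real.sqrt (e j)) * ∑ lidx, ‖w n lidx‖ := by rw [Finset.mul_sum]
      _ ≤ (C1 * Real.sqrt (e j)) * (c2 * s n) := by
          apply mul_le_mul_of_nonneg_left (hσ n) (mul_nonneg hC1nn (Real.sqrt_nonneg _))
      _ = C1 * c2 * (Real.sqrt (e j) * s n) := by ring
  -- telescoping
  have htel2 : ∀ i j : ℕ, i ≤ j → x i - x j = ∑ n ∈ Finset.Ico i j, (x n - x (n+1)) := by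
    intro i j hij
    induction j, hij using Nat.le_induction with
    | base => simp
    | succ j hij ih =>
      rw [Finset.sum_Ico_succ_top hij, ← ih]
      abel
  set S : ℕ → ℝ := fun j => ∑ n ∈ Finset.range j, s n with hSdef
  have hSnn : ∀ j, 0 ≤ S j := fun j => Finset.sum_nonneg fun n _ => hsnn n
  -- the main Cauchy-type estimate
  have hEst : ∀ i j : ℕ, i ≤ j → 1 ≤ j → ‖x i - x j‖ ^ 2 ≤
      (‖x i - m‖ ^ 2 - ‖x j - m‖ ^ 2) + 2 * (C1 * c2) * Real.sqrt (e j * S j ^ 2) := by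
    intro i j hij hj1
    have hid : ‖x i - x j‖ ^ 2 = ‖x i - m‖ ^ 2 - ‖x j - m‖ ^ 2 - 2 * ⟪x i - x j, x j - m⟫ := by
      have h1 : x i - m = (x i - x j) + (x j - m) := by abel
      have h2 := norm_add_sq_real (x i - x j) (x j - m)
      rw [← h1] at h2
      linarith
    have hIco_le : ∑ n ∈ Finset.Ico i j, s n ≤ S j := by
      simp only [hSdef]
      apply Finset.sum_le_sum_of_subset_of_nonneg
      · intro n hn
        simp only [Finset.mem_Ico] at hn
        exact Finset.mem_range.2 hn.2
      · intro n _ _; exact hsnn n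
    have hbound : |⟪x i - x j, x j - m⟫| ≤ (C1 * c2) * Real.sqrt (e j * S j ^ 2) := by
      rw [htel2 i j hij, sum_inner]
      refine (Finset.abs_sum_le_sum_abs _ _).trans ?_
      have h1 : ∀ n ∈ Finset.Ico i j, |⟪x n - x (n+1), x j - m⟫| ≤ C1 * c2 * Real.sqrt (e j) * s n := by
        intro n _
        rw [real_inner_comm]
        have := hF j hj1 n
        linarith [this]
      calc ∑ n ∈ Finset.Ico i j, |⟪x n - x (n+1), x j - m⟫|
          ≤ ∑ n ∈ Finset.Ico i j, C1 * c2 * Real.sqrt (e j) * s n := Finset.sum_le_sum h1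
        _ = C1 * c2 * Real.sqrt (e j) * ∑ n ∈ Finset.Ico i j, s n := by rw [Finset.mul_sum]
        _ ≤ C1 * c2 * Real.sqrt (e j) * S j := by
            apply mul_le_mul_of_nonneg_left hIco_le
              (mul_nonneg (mul_nonneg hC1nn hc2nn) (Real.sqrt_nonneg _))
        _ = (C1 * c2) * Real.sqrt (e j * S j ^ 2) := by
            rw [Real.sqrt_mul (henn j), Real.sqrt_sq (hSnn j)]
            ring
    have habs := (abs_le.1 hbound).1
    linarith
  -- extraction of a good subsequence
  have hfreq : ∀ r : ℕ, ∃ᶠ jj in atTop, (e jj * S jj ^ 2 < 1/((r:ℝ)+1) ∧ 1 ≤ jj) := by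
    intro r
    rw [Filter.frequently_atTop]
    intro N
    obtain ⟨jj, hjj1, hjj2⟩ := aux_analytic b hbnn (‖x 0 - m‖ ^ 2) hsum_b (pbar+1)
      (Nat.succ_pos _) (1/((r:ℝ)+1)) (by positivity) (max N 1)
    exact ⟨jj, le_trans (le_max_left _ _) hjj1, hjj2, le_trans (le_max_right _ _) hjj1⟩
  obtain ⟨φ, hφmono, hφ⟩ := Filter.extraction_forall_of_frequently hfreq
  have hφ1 : ∀ r, 1 ≤ φ r := fun r => (hφ r).2
  have hφη : ∀ r, e (φ r) * S (φ r) ^ 2 < 1/((r:ℝ)+1) := fun r => (hφ r).1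
  have hηnn : ∀ j, 0 ≤ e j * S j ^ 2 := fun j => mul_nonneg (henn j) (sq_nonneg _)
  -- the subsequence is Cauchy
  set β : ℕ → ℝ := fun R =>
    Real.sqrt ((‖x (φ R) - m‖ ^ 2 - L) + 2 * (C1 * c2) * Real.sqrt (1/((R:ℝ)+1))) with hβdef
  have hcauchy : CauchySeq (fun r => x (φ r)) := by
    apply cauchySeq_of_le_tendsto_0 β
    · intro n mm R hn hm
      wlog hnm : n ≤ mm generalizing n mm
      · rw [dist_comm]
        exact this mm n hm hn (le_of_not_ge hnm)
      rw [dist_eq_norm]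
      have hab : φ n ≤ φ mm := hφmono.monotone hnm
      have h1 := hEst (φ n) (φ mm) hab (hφ1 mm)
      have h2 : ‖x (φ n) - m‖ ^ 2 ≤ ‖x (φ R) - m‖ ^ 2 := hmono (hφmono.monotone hn)
      have h3 : L ≤ ‖x (φ mm) - m‖ ^ 2 := hLle _
      have h4 : Real.sqrt (e (φ mm) * S (φ mm) ^ 2) ≤ Real.sqrt (1/((R:ℝ)+1)) := by
        apply Real.sqrt_le_sqrt
        refine le_trans (le_of_lt (hφη mm)) ?_
        apply one_div_le_one_div_of_le (by positivity)
        have := (Nat.cast_le (α := ℝ)).2 hm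
        linarith
      have h5 : ‖x (φ n) - x (φ mm)‖ ^ 2 ≤
          (‖x (φ R) - m‖ ^ 2 - L) + 2 * (C1 * c2) * Real.sqrt (1/((R:ℝ)+1)) := by
        have h6 := mul_le_mul_of_nonneg_left h4
          (mul_nonneg (by norm_num) (mul_nonneg hC1nn hc2nn) : (0:ℝ) ≤ 2 * (C1 * c2))
        linarith
      rw [hβdef]
      rw [← Real.sqrt_sq (norm_nonneg (x (φ n) - x (φ mm)))]
      exact Real.sqrt_le_sqrt h5
    · have h1 : Tendsto (fun R => ‖x (φ R) - m‖ ^ 2) atTop (nhds L) :=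
        hLtend.comp hφmono.tendsto_atTop
      have h2 : Tendsto (fun R : ℕ => 1/((R:ℝ)+1)) atTop (nhds 0) :=
        tendsto_one_div_add_atTop_nhds_zero_nat
      have h3 : Tendsto (fun R => (‖x (φ R) - m‖ ^ 2 - L) +
          2 * (C1 * c2) * Real.sqrt (1/((R:ℝ)+1))) atTop (nhds 0) := by
        have h4 := (h1.sub (tendsto_const_nhds : Tendsto (fun _ : ℕ => L) atTop (nhds L)))
        have h5 := ((Real.continuous_sqrt.tendsto' 0 0 (by simp)).comp h2).const_mul
          (2 * (C1 * c2))
        have h6 := h4.add h5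
        have hval : (L - L) + 2 * (C1 * c2) * 0 = 0 := by ring
        rw [← hval]
        exact h6
      have h7 := (Real.continuous_sqrt.tendsto' 0 0 Real.sqrt_zero).comp h3
      exact h7
  obtain ⟨y, hy⟩ := cauchySeq_tendsto_of_complete hcauchy
  -- e tends to zero
  have hsumm : Summable b := summable_of_sum_range_le hbnn hsum_b
  have he0 : Tendsto e atTop (nhds 0) := by
    have hq : ∀ q : ℕ, Tendsto (fun j => b (j + q)) atTop (nhds 0) := fun q =>
      hsumm.tendsto_atTop_zero.comp (tendsto_add_atTop_nat q)
    have h := tendsto_finset_sum (Finset.range (pbar+1)) (fun q _ => hq q)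
    rw [show (0:ℝ) = ∑ _q ∈ Finset.range (pbar+1), (0:ℝ) by simp]
    exact h
  have heφ0 : Tendsto (fun r => e (φ r)) atTop (nhds 0) := he0.comp hφmono.tendsto_atTop
  -- the limit lies in M'
  have hyM : y ∈ M' := by
    rw [hM', Submodule.mem_iInf]
    intro lidx
    choose u hu1 hu2 using fun r => hE (φ r) (hφ1 r) lidx
    have hcl : IsClosed ((M lidx : Set X)) :=
      (completeSpace_coe_iff_isComplete.1 inferInstance).isClosed
    have hdiff : Tendsto (fun r => x (φ r) - u r) atTop (nhds 0) := by
      apply squeeze_zero_norm hu2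
      have h1 : Tendsto (fun r => C1 * Real.sqrt (e (φ r))) atTop (nhds 0) := by
        have h2 := ((Real.continuous_sqrt.tendsto' 0 0 Real.sqrt_zero).comp heφ0).const_mul C1
        rw [show (0:ℝ) = C1 * 0 by ring]
        exact h2
      exact h1
    have hulim : Tendsto u atTop (nhds y) := by
      have h3 := hy.sub hdiff
      have h4 : (fun r => x (φ r) - (x (φ r) - u r)) = u := funext fun r => by abel
      rw [h4, sub_zero] at h3
      exact h3
    exact hcl.mem_of_tendsto hulim (Filter.Eventually.of_forall hu1)
  -- the differences stay in M'ᗮ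
  have hzperp : ∀ j, x j - m ∈ M'ᗮ := by
    intro j
    induction j with
    | zero => rw [hmdef]; exact Submodule.sub_starProjection_mem_orthogonal _
    | succ j ih =>
      have hsplit : x (j+1) - m = (x j - m) - (x j - x (j+1)) := by abel
      rw [hsplit]
      apply Submodule.sub_mem _ ih
      rw [hΔ j]
      apply Submodule.sum_mem
      intro lidx _
      have h1 : (M lidx)ᗮ ≤ M'ᗮ := Submodule.orthogonal_le (hM'le lidx)
      apply h1
      simp only [hwdef]
      exact Submodule.add_mem _ (hperp j lidx).1 (hperp j lidx).2
  have hyperp : y - m ∈ M'ᗮ := by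
    have hcl := Submodule.isClosed_orthogonal M'
    exact hcl.mem_of_tendsto
      (hy.sub (tendsto_const_nhds : Tendsto (fun _ : ℕ => m) atTop (nhds m)))
      (Filter.Eventually.of_forall fun r => hzperp (φ r))
  have hym : y - m ∈ M' := Submodule.sub_mem _ hyM hmM'
  have hy0 : y = m := by
    have h0 : ⟪y - m, y - m⟫ = 0 := (Submodule.mem_orthogonal M' _).1 hyperp _ hym
    have h1 : y - m = 0 := inner_self_eq_zero.1 h0
    have := sub_eq_zero.1 h1
    exact this
  -- conclude L = 0
  have hL0 : L = 0 := by
    have h1 : Tendsto (fun r => ‖x (φ r) - m‖ ^ 2) atTop (nhds L) :=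
      hLtend.comp hφmono.tendsto_atTop
    have h2 : Tendsto (fun r => ‖x (φ r) - m‖ ^ 2) atTop (nhds (‖y - m‖ ^ 2)) := by
      have h3 := (hy.sub (tendsto_const_nhds : Tendsto (fun _ : ℕ => m) atTop (nhds m))).norm
      exact h3.pow 2
    have h4 := tendsto_nhds_unique h1 h2
    rw [h4, hy0]
    simp
  -- conclude
  have hnormsq0 : Tendsto (fun j => ‖x j - m‖ ^ 2) atTop (nhds 0) := hL0 ▸ hLtend
  have hnorm0 : Tendsto (fun j => ‖x j - m‖) atTop (nhds 0) := by
    have h2 := (Real.continuous_sqrt.tendsto' 0 0 Real.sqrt_zero).comp hnormsq0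
    have h3 : (fun j => Real.sqrt (‖x j - m‖ ^ 2)) = fun j => ‖x j - m‖ :=
      funext fun j => Real.sqrt_sq (norm_nonneg _)
    rw [← h3]
    exact h2
  rw [tendsto_iff_dist_tendsto_zero]
  simp only [dist_eq_norm]
  exact hnorm0
end

section
/- Consider Algorithm 2 (Accelerated Projections 2): let M_1,...,M_k be closed linear subspaces of a real Hilbert space X, M := ⋂_{l=1}^k M_l, and x_0 ∈ M_1. For each i ≥ 0 choose l_i ∈ {2,...,k}, set x_i′ := P_{M_{l_i}}(x_i), x_i″ := P_{M_1}(x_i′), a_i := x_i − x_i″, and, when a_i ≠ 0, H_i := {x ∈ X : ⟨a_i, x⟩ = b_i} with b_i := ⟨a_i, x_i + (‖x_i − x_i′‖²/‖x_i − x_i″‖²)(x_i″ − x_i)⟩ (when a_i = 0 set H_i := X); then M_1 ∩ M_{l_i} ⊆ H_i and a_i ∈ M_1. Choose J_i ⊆ {0,1,...,i} with i ∈ J_i, set H̃_i := ⋂_{j∈J_i} H_j (a closed affine subspace containing M), and x_{i+1} := P_{H̃_i}(x_i). Suppose additionally: (A) there is an integer p̄ ≥ 0 such that for every l ∈ {2,...,k}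 and every i > 0 there is an integer p_i^l ∈ [0, p̄] with l_{i+p_i^l} = l (so that x′_{i+p_i^l} = P_{M_l}(x_{i+p_i^l})); and (B) for every i, x_0 − x_i lies in the linear span of {a_j : j ∈ J_i}. Then the sequence {x_i} converges strongly to P_M(x_0). -/
open Filter
open scoped RealInnerProductSpace

section Alg2Helpers
variable {X : Type*} [NormedAddCommGroup X] [InnerProductSpace ℝ X]

lemma alg2_min_inner_zero {v w : X} (h : ∀ t : ℝ, ‖v‖ ≤ ‖v - t • w‖) :
    ⟪v, w⟫ = 0 := by
  by_cases hw : w = 0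
  · simp [hw]
  have hw2 : (0:ℝ) < ‖w‖ ^ 2 := pow_pos (norm_pos_iff.mpr hw) 2
  set c : ℝ := ⟪v, w⟫ with hc
  set t : ℝ := c / ‖w‖ ^ 2 with ht
  have h2 : ‖v‖ ^ 2 ≤ ‖v - t • w‖ ^ 2 := by
    have h1 := h t
    nlinarith [norm_nonneg v, norm_nonneg (v - t • w)]
  rw [norm_sub_sq_real, real_inner_smul_right, norm_smul, Real.norm_eq_abs] at h2
  have habs : (|t| * ‖w‖) ^ 2 = t ^ 2 * ‖w‖ ^ 2 := by
    rw [mul_pow, sq_abs]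
  rw [habs] at h2
  have htw : t * ‖w‖ ^ 2 = c := div_mul_cancel₀ _ (ne_of_gt hw2)
  have h4 : t ^ 2 * ‖w‖ ^ 2 = t * c := by
    rw [pow_two, mul_assoc, htw]
  have h5 : t * c ≤ 0 := by nlinarith
  have h6 : c * c = (t * c) * ‖w‖ ^ 2 := by rw [← htw]; ring
  have h7 : c ^ 2 ≤ 0 := by nlinarith
  have h8 : c = 0 := by nlinarith [sq_nonneg c]
  exact h8

lemma alg2_mem_orth_span {s : Set X} {y : X} (h : ∀ v ∈ s, ⟪v, y⟫ = 0) :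
    y ∈ (Submodule.span ℝ s)ᗮ := by
  have hle : Submodule.span ℝ s ≤ (ℝ ∙ y)ᗮ :=
    Submodule.span_le.mpr fun v hv =>
      Submodule.mem_orthogonal_singleton_iff_inner_left.mpr (h v hv)
  exact (Submodule.orthogonal_le hle)
    ((Submodule.le_orthogonal_orthogonal _) (Submodule.mem_span_singleton_self y))

end Alg2Helpers

/-- Strong convergence of Algorithm 2: in Algorithm 2, with
`M 0` playing the role of `M₁` (the subspace that is easy to project onto),
`x_0 ∈ M 0`, `l_i ≠ 0` (i.e. `l_i ∈ {2,…,k}`), `x'_i = P_{M_{l_i}} x_i`,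
`x''_i = P_{M 0} x'_i`, `a_i = x_i - x''_i`,
`b_i = ⟪a_i, x_i + (‖x_i - x'_i‖²/‖x_i - x''_i‖²)(x''_i - x_i)⟫`,
`H_i = {x : ⟪a_i, x⟫ = b_i}` (which is all of `X` when `a_i = 0`),
`i ∈ J_i ⊆ {0,…,i}`, `H̃_i = ⋂_{j ∈ J_i} H_j`, and `x_{i+1} = P_{H̃_i}(x_i)`
(the nearest point of `H̃_i` to `x_i`), assume (A) there is `p̄` such that for
every `l ≠ 0` and every `i > 0` there is `p_i^l ∈ [0, p̄]` with
`l_{i+p_i^l} = l`, and (B) `x_0 - x_i` lies in the span of `{a_j : j ∈ J_i}`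
for every `i`.  Then `x_i → P_M(x_0)` strongly, where `M = ⨅ l, M l`. -/
theorem algorithm2_strong_convergence
    {X : Type*} [NormedAddCommGroup X] [InnerProductSpace ℝ X] [CompleteSpace X]
    {k : ℕ} (M : Fin (k + 1) → Submodule ℝ X) [∀ l, CompleteSpace (M l)]
    [CompleteSpace (⨅ l, M l : Submodule ℝ X)]
    (l : ℕ → Fin (k + 1)) (hl : ∀ i, l i ≠ 0)
    (x x' x'' a : ℕ → X) (b : ℕ → ℝ) (J : ℕ → Finset ℕ)
    (hx0 : x 0 ∈ M 0)
    (hx' : ∀ i, x' i = (Submodule.orthogonalProjectionOnto (M (l i)) (x i) : X))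
    (hx'' : ∀ i, x'' i = (Submodule.orthogonalProjectionOnto (M 0) (x' i) : X))
    (ha : ∀ i, a i = x i - x'' i)
    (hb : ∀ i, b i =
      ⟪a i, x i + (‖x i - x' i‖ ^ 2 / ‖x i - x'' i‖ ^ 2) • (x'' i - x i)⟫)
    (hJ : ∀ i, i ∈ J i ∧ ∀ j ∈ J i, j ≤ i)
    -- `x_{i+1}` is the nearest-point projection of `x_i` onto the closed
    -- affine subspace `H̃_i = ⋂_{j ∈ J_i} {y : ⟪a_j, y⟫ = b_j}`:
    (hstep : ∀ i,
      (∀ j ∈ J i, ⟪a j, x (i + 1)⟫ = b j) ∧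
      ∀ y : X, (∀ j ∈ J i, ⟪a j, y⟫ = b j) → ‖x i - x (i + 1)‖ ≤ ‖x i - y‖)
    -- condition (A):
    (hA : ∃ pbar : ℕ, ∀ lidx : Fin (k + 1), lidx ≠ 0 → ∀ i, 0 < i →
      ∃ p ≤ pbar, l (i + p) = lidx)
    -- condition (B):
    (hB : ∀ i, x 0 - x i ∈ Submodule.span ℝ (a '' (J i : Set ℕ))) :
    Tendsto x atTop
      (nhds (Submodule.orthogonalProjectionOnto (⨅ l, M l : Submodule ℝ X) (x 0) : X)) := by
  classical
  obtain ⟨pbar, hA⟩ := hA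
  obtain ⟨z, hzdef⟩ : ∃ z : X,
      z = (Submodule.orthogonalProjectionOnto (⨅ l, M l : Submodule ℝ X) (x 0) : X) := ⟨_, rfl⟩
  have hzM : z ∈ (⨅ l, M l : Submodule ℝ X) := by
    rw [hzdef]; exact Submodule.coe_mem _
  have hx0z : x 0 - z ∈ (⨅ l, M l : Submodule ℝ X)ᗮ := by
    rw [hzdef]; exact Submodule.sub_starProjection_mem_orthogonal _
  -- basic membership facts
  have hx'm : ∀ i, x' i ∈ M (l i) := fun i => by
    rw [hx' i]; exact Submodule.coe_mem _
  have hx''m : ∀ i, x'' i ∈ M 0 := fun i => by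
    rw [hx'' i]; exact Submodule.coe_mem _
  have hperp1 : ∀ i, x i - x' i ∈ (M (l i))ᗮ := fun i => by
    rw [hx' i]; exact Submodule.sub_starProjection_mem_orthogonal _
  have hperp2 : ∀ i, x' i - x'' i ∈ (M 0)ᗮ := fun i => by
    rw [hx'' i]; exact Submodule.sub_starProjection_mem_orthogonal _
  -- (1) each a i is orthogonal to ⨅ l, M l
  have haMi : ∀ i, a i ∈ (⨅ l, M l : Submodule ℝ X)ᗮ := by
    intro i
    rw [Submodule.mem_orthogonal]
    intro m hm
    have hm0 : m ∈ M 0 := (Submodule.mem_iInf _).1 hm 0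
    have hml : m ∈ M (l i) := (Submodule.mem_iInf _).1 hm (l i)
    have h1 : ⟪m, x i - x' i⟫ = 0 := by
      rw [real_inner_comm]
      exact (Submodule.mem_orthogonal' _ _).1 (hperp1 i) m hml
    have h2 : ⟪m, x' i - x'' i⟫ = 0 := by
      rw [real_inner_comm]
      exact (Submodule.mem_orthogonal' _ _).1 (hperp2 i) m hm0
    have hsplit : a i = (x i - x' i) + (x' i - x'' i) := by rw [ha i]; abel
    rw [hsplit, inner_add_right, h1, h2, add_zero]
  -- the spans S i are ⊥ to ⨅ l, M l
  have hSMi : ∀ i, Submodule.span ℝ (a '' (J i : Set ℕ)) ≤ (⨅ l, M l : Submodule ℝ X)ᗮ := by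
    intro i
    rw [Submodule.span_le]
    rintro v ⟨j, _, rfl⟩
    exact haMi j
  -- complete spans
  have hfd : ∀ i, CompleteSpace (Submodule.span ℝ (a '' (J i : Set ℕ))) := by
    intro i
    haveI : FiniteDimensional ℝ (Submodule.span ℝ (a '' (J i : Set ℕ))) :=
      FiniteDimensional.span_of_finite ℝ (((J i).finite_toSet).image a)
    exact FiniteDimensional.complete ℝ _
  -- (4) the step lies in the span
  have horth : ∀ i, x i - x (i + 1) ∈ Submodule.span ℝ (a '' (J i : Set ℕ)) := by
    intro i
    haveI := hfd i
    rw [← Submodule.orthogonal_orthogonal (Submodule.span ℝ (a '' (J i : Set ℕ))),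
      Submodule.mem_orthogonal]
    intro w hw
    rw [real_inner_comm]
    apply alg2_min_inner_zero
    intro t
    have hfeas : ∀ j ∈ J i, ⟪a j, x (i + 1) + t • w⟫ = b j := by
      intro j hj
      have haj : a j ∈ Submodule.span ℝ (a '' (J i : Set ℕ)) :=
        Submodule.subset_span ⟨j, hj, rfl⟩
      have hw0 : ⟪a j, w⟫ = 0 := (Submodule.mem_orthogonal _ _).1 hw (a j) haj
      rw [inner_add_right, real_inner_smul_right, hw0, (hstep i).1 j hj]; ring
    have hmin := (hstep i).2 _ hfeas
    calc ‖x i - x (i + 1)‖ ≤ ‖x i - (x (i + 1) + t • w)‖ := hmin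
    _ = ‖(x i - x (i + 1)) - t • w‖ := by
        rw [show x i - (x (i + 1) + t • w) = (x i - x (i + 1)) - t • w from by abel]
  -- (6)
  have hx0S : ∀ i, x 0 - x (i + 1) ∈ Submodule.span ℝ (a '' (J i : Set ℕ)) := by
    intro i
    have h1 := (Submodule.span ℝ (a '' (J i : Set ℕ))).add_mem (hB i) (horth i)
    rwa [show x 0 - x i + (x i - x (i + 1)) = x 0 - x (i + 1) from by abel] at h1
  -- (7) x i ∈ M 0
  have hxM0 : ∀ i, x i ∈ M 0 := by
    have key : ∀ i, ∀ j ≤ i, x j ∈ M 0 := by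
      intro i
      induction i with
      | zero => intro j hj; rw [Nat.le_zero.mp hj]; exact hx0
      | succ n ih =>
        intro j hj
        rcases Nat.eq_or_lt_of_le hj with rfl | hj'
        · have hSM0 : Submodule.span ℝ (a '' (J n : Set ℕ)) ≤ M 0 := by
            rw [Submodule.span_le]
            rintro v ⟨t, ht, rfl⟩
            have htn : t ≤ n := (hJ n).2 t ht
            rw [ha t]
            exact (M 0).sub_mem (ih t htn) (hx''m t)
          have hrw : x (n + 1) = x n - (x n - x (n + 1)) := by abel
          rw [hrw]
          exact (M 0).sub_mem (ih n le_rfl) (hSM0 (horth n))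
        · exact ih j (Nat.lt_succ_iff.mp hj')
    exact fun i => key i i le_rfl
  -- (8) key identity
  have hkey : ∀ i, ⟪a i, x i⟫ = ‖x i - x' i‖ ^ 2 := by
    intro i
    have h1 : ⟪x' i - x'' i, x i⟫ = 0 :=
      (Submodule.mem_orthogonal' _ _).1 (hperp2 i) _ (hxM0 i)
    have h2 : ⟪x i - x' i, x' i⟫ = 0 :=
      (Submodule.mem_orthogonal' _ _).1 (hperp1 i) _ (hx'm i)
    have h3 : ⟪x i - x' i, x i⟫ = ‖x i - x' i‖ ^ 2 := by
      have hrw : ⟪x i - x' i, x i⟫ = ⟪x i - x' i, (x i - x' i) + x' i⟫ := by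
        rw [sub_add_cancel]
      rw [hrw, inner_add_right, h2, real_inner_self_eq_norm_sq, add_zero]
    have hsplit : a i = (x i - x' i) + (x' i - x'' i) := by rw [ha i]; abel
    rw [hsplit, inner_add_left, h1, h3, add_zero]
  -- (9) b = 0
  have hb0 : ∀ i, b i = 0 := by
    intro i
    by_cases h0 : x i - x'' i = 0
    · rw [hb i, ha i, h0, inner_zero_left]
    · have hn : ‖x i - x'' i‖ ≠ 0 := fun hh => h0 (norm_eq_zero.mp hh)
      have h1 : ⟪a i, x'' i - x i⟫ = -‖x i - x'' i‖ ^ 2 := by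
        rw [ha i, show x'' i - x i = -(x i - x'' i) from by abel, inner_neg_right,
          real_inner_self_eq_norm_sq]
      have hcanc : ‖x i - x' i‖ ^ 2 / ‖x i - x'' i‖ ^ 2 * ‖x i - x'' i‖ ^ 2
          = ‖x i - x' i‖ ^ 2 := div_mul_cancel₀ _ (pow_ne_zero 2 hn)
      rw [hb i, inner_add_right, real_inner_smul_right, hkey i, h1, mul_neg]
      linarith
  -- x (i+1) ∈ (S i)ᗮ
  have hxS : ∀ i, x (i + 1) ∈ (Submodule.span ℝ (a '' (J i : Set ℕ)))ᗮ := by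
    intro i
    apply alg2_mem_orth_span
    rintro v ⟨j, hj, rfl⟩
    rw [(hstep i).1 j hj, hb0 j]
  -- z ∈ (S i)ᗮ
  have hzS : ∀ i, z ∈ (Submodule.span ℝ (a '' (J i : Set ℕ)))ᗮ := fun i =>
    (Submodule.orthogonal_le (hSMi i)) ((Submodule.le_orthogonal_orthogonal _) hzM)
  have hSo : ∀ i, ∀ u ∈ Submodule.span ℝ (a '' (J i : Set ℕ)),
      ∀ v ∈ (Submodule.span ℝ (a '' (J i : Set ℕ)))ᗮ, ⟪u, v⟫ = 0 :=
    fun i u hu v hv => (Submodule.mem_orthogonal _ _).1 hv u hu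
  -- (11) Fejér identity
  have hfej : ∀ i, ‖x i - z‖ ^ 2 = ‖x i - x (i + 1)‖ ^ 2 + ‖x (i + 1) - z‖ ^ 2 := by
    intro i
    have hcross : ⟪x i - x (i + 1), x (i + 1) - z⟫ = 0 := by
      have hmem : x (i + 1) - z ∈ (Submodule.span ℝ (a '' (J i : Set ℕ)))ᗮ :=
        Submodule.sub_mem _ (hxS i) (hzS i)
      exact hSo i _ (horth i) _ hmem
    have hdecomp : x i - z = (x i - x (i + 1)) + (x (i + 1) - z) := by abel
    rw [hdecomp, norm_add_sq_real, hcross]; ring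
  have hdanti : Antitone (fun n => ‖x n - z‖) := by
    apply antitone_nat_of_succ_le
    intro n
    have h1 := hfej n
    nlinarith [norm_nonneg (x n - z), norm_nonneg (x (n + 1) - z), sq_nonneg ‖x n - x (n + 1)‖]
  have hbdd : BddBelow (Set.range (fun n => ‖x n - z‖)) := by
    refine ⟨0, ?_⟩
    rintro r ⟨n, rfl⟩
    exact norm_nonneg _
  have hdlim : Tendsto (fun n => ‖x n - z‖) atTop (nhds (⨅ n, ‖x n - z‖)) :=
    tendsto_atTop_ciInf hdanti hbdd
  -- s → 0
  have hs0 : Tendsto (fun i => ‖x i - x (i + 1)‖) atTop (nhds 0) := by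
    have hd2 : Tendsto (fun n => ‖x n - z‖ ^ 2) atTop (nhds ((⨅ n, ‖x n - z‖) ^ 2)) :=
      hdlim.pow 2
    have hd2' : Tendsto (fun n => ‖x (n + 1) - z‖ ^ 2) atTop
        (nhds ((⨅ n, ‖x n - z‖) ^ 2)) := hd2.comp (tendsto_add_atTop_nat 1)
    have h1 : Tendsto (fun n => ‖x n - z‖ ^ 2 - ‖x (n + 1) - z‖ ^ 2) atTop (nhds 0) := by
      have := hd2.sub hd2'
      simpa using this
    have h2 : Tendsto (fun n => ‖x n - x (n + 1)‖ ^ 2) atTop (nhds 0) :=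
      h1.congr (fun n => by rw [hfej n]; ring)
    have h3 := (Real.continuous_sqrt.tendsto 0).comp h2
    rw [Real.sqrt_zero] at h3
    exact h3.congr (fun n => Real.sqrt_sq (norm_nonneg _))
  -- (14) ‖x i − x' i‖ ≤ step size
  have hsx' : ∀ i, ‖x i - x' i‖ ≤ ‖x i - x (i + 1)‖ := by
    intro i
    have h1 : ⟪a i, x (i + 1)⟫ = 0 := by rw [(hstep i).1 i (hJ i).1, hb0 i]
    have h2 : ‖x i - x' i‖ ^ 2 = ⟪a i, x i - x (i + 1)⟫ := by
      rw [inner_sub_right, h1, hkey i]; ring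
    have h3 : ‖a i‖ ≤ ‖x i - x' i‖ := by
      have hc : ⟪x i - x'' i, x'' i - x' i⟫ = 0 := by
        have hm : x i - x'' i ∈ M 0 := (M 0).sub_mem (hxM0 i) (hx''m i)
        have hp : x'' i - x' i ∈ (M 0)ᗮ := by
          have := ((M 0)ᗮ).neg_mem (hperp2 i)
          rwa [show -(x' i - x'' i) = x'' i - x' i from by abel] at this
        exact (Submodule.mem_orthogonal _ _).1 hp _ hm
      have hd : x i - x' i = (x i - x'' i) + (x'' i - x' i) := by abel
      have hsq : ‖x i - x' i‖ ^ 2 = ‖x i - x'' i‖ ^ 2 + ‖x'' i - x' i‖ ^ 2 := by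
        rw [hd, norm_add_sq_real, hc]; ring
      have h4 : ‖a i‖ ^ 2 ≤ ‖x i - x' i‖ ^ 2 := by
        rw [ha i]; nlinarith [sq_nonneg ‖x'' i - x' i‖]
      nlinarith [norm_nonneg (a i), norm_nonneg (x i - x' i)]
    have h5 : ⟪a i, x i - x (i + 1)⟫ ≤ ‖a i‖ * ‖x i - x (i + 1)‖ :=
      real_inner_le_norm _ _
    by_cases hz0 : ‖x i - x' i‖ = 0
    · rw [hz0]; exact norm_nonneg _
    · have hpos : 0 < ‖x i - x' i‖ := lt_of_le_of_ne (norm_nonneg _) (Ne.symm hz0)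
      nlinarith [norm_nonneg (x i - x (i + 1))]
  -- sum of upcoming step sizes tends to 0
  have hE0 : Tendsto (fun n => ∑ q ∈ Finset.range (pbar + 1), ‖x (n + q) - x (n + q + 1)‖)
      atTop (nhds 0) := by
    have hterm : ∀ q : ℕ, Tendsto (fun n => ‖x (n + q) - x (n + q + 1)‖) atTop (nhds 0) :=
      fun q => hs0.comp (tendsto_add_atTop_nat q)
    have hsum := tendsto_finset_sum (Finset.range (pbar + 1))
      (fun q (_ : q ∈ Finset.range (pbar + 1)) => hterm q)
    simpa using hsum
  -- decay of inner products against (M li)ᗮ for li ≠ 0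
  have hdist : ∀ li : Fin (k + 1), li ≠ 0 → ∀ v ∈ (M li)ᗮ, ∀ n : ℕ, 0 < n →
      |⟪v, x n⟫| ≤ ‖v‖ * ∑ q ∈ Finset.range (pbar + 1), ‖x (n + q) - x (n + q + 1)‖ := by
    intro li hli v hv n hn
    obtain ⟨p, hp, hlp⟩ := hA li hli n hn
    have hx'mem : x' (n + p) ∈ M li := by rw [← hlp]; exact hx'm (n + p)
    have hv0 : ⟪v, x' (n + p)⟫ = 0 := (Submodule.mem_orthogonal' _ _).1 hv _ hx'mem
    have h1 : ⟪v, x n⟫ = ⟪v, x n - x' (n + p)⟫ := by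
      rw [inner_sub_right, hv0, sub_zero]
    have hchain : ‖x n - x (n + p)‖ ≤ ∑ q ∈ Finset.range p, ‖x (n + q) - x (n + q + 1)‖ := by
      have h := dist_le_range_sum_dist (fun q => x (n + q)) p
      simp only [add_zero] at h
      calc ‖x n - x (n + p)‖ = dist (x n) (x (n + p)) := (dist_eq_norm _ _).symm
      _ ≤ ∑ q ∈ Finset.range p, dist (x (n + q)) (x (n + (q + 1))) := h
      _ = ∑ q ∈ Finset.range p, ‖x (n + q) - x (n + q + 1)‖ :=
          Finset.sum_congr rfl (fun q _ => by rw [dist_eq_norm, ← Nat.add_assoc])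
    have htri : ‖x n - x' (n + p)‖ ≤ ‖x n - x (n + p)‖ + ‖x (n + p) - x' (n + p)‖ := by
      have := norm_add_le (x n - x (n + p)) (x (n + p) - x' (n + p))
      rwa [show x n - x (n + p) + (x (n + p) - x' (n + p)) = x n - x' (n + p) from by abel]
        at this
    have h2 : ‖x n - x' (n + p)‖ ≤ ∑ q ∈ Finset.range (p + 1), ‖x (n + q) - x (n + q + 1)‖ := by
      calc ‖x n - x' (n + p)‖ ≤ ‖x n - x (n + p)‖ + ‖x (n + p) - x' (n + p)‖ := htri
      _ ≤ (∑ q ∈ Finset.range p, ‖x (n + q) - x (n + q + 1)‖) + ‖x (n + p) - x (n + p + 1)‖ :=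
          add_le_add hchain (hsx' (n + p))
      _ = ∑ q ∈ Finset.range (p + 1), ‖x (n + q) - x (n + q + 1)‖ :=
          (Finset.sum_range_succ _ p).symm
    have h3 : (∑ q ∈ Finset.range (p + 1), ‖x (n + q) - x (n + q + 1)‖)
        ≤ ∑ q ∈ Finset.range (pbar + 1), ‖x (n + q) - x (n + q + 1)‖ :=
      Finset.sum_le_sum_of_subset_of_nonneg
        (Finset.range_subset_range.mpr (by omega)) (fun q _ _ => norm_nonneg _)
    calc |⟪v, x n⟫| = |⟪v, x n - x' (n + p)⟫| := by rw [h1]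
    _ ≤ ‖v‖ * ‖x n - x' (n + p)‖ := abs_real_inner_le_norm _ _
    _ ≤ ‖v‖ * ∑ q ∈ Finset.range (pbar + 1), ‖x (n + q) - x (n + q + 1)‖ :=
        mul_le_mul_of_nonneg_left (h2.trans h3) (norm_nonneg v)
  -- boundedness
  have hxb : ∀ n, ‖x n‖ ≤ ‖z‖ + ‖x 0 - z‖ := by
    intro n
    have h1 : ‖x n - z‖ ≤ ‖x 0 - z‖ := hdanti (Nat.zero_le n)
    have h2 : ‖x n‖ ≤ ‖z‖ + ‖x n - z‖ := by
      have := norm_add_le z (x n - z)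
      rwa [show z + (x n - z) = x n from by abel] at this
    linarith
  -- ultrafilter limits of inner products
  have hUat : ((Filter.hyperfilter ℕ : Ultrafilter ℕ) : Filter ℕ) ≤ atTop :=
    Nat.hyperfilter_le_atTop
  have hlimex : ∀ v : X, ∃ c : ℝ,
      Tendsto (fun n => ⟪v, x n⟫) ((Filter.hyperfilter ℕ : Ultrafilter ℕ) : Filter ℕ)
        (nhds c) := by
    intro v
    have hmem : ∀ n, ⟪v, x n⟫ ∈
        Set.Icc (-(‖v‖ * (‖z‖ + ‖x 0 - z‖))) (‖v‖ * (‖z‖ + ‖x 0 - z‖)) := by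
      intro n
      have h1 : |⟪v, x n⟫| ≤ ‖v‖ * (‖z‖ + ‖x 0 - z‖) :=
        le_trans (abs_real_inner_le_norm v (x n))
          (mul_le_mul_of_nonneg_left (hxb n) (norm_nonneg v))
      exact Set.mem_Icc.mpr (abs_le.mp h1)
    have hle : ((Filter.hyperfilter ℕ : Ultrafilter ℕ).map (fun n => ⟪v, x n⟫) : Filter ℝ)
        ≤ Filter.principal
          (Set.Icc (-(‖v‖ * (‖z‖ + ‖x 0 - z‖))) (‖v‖ * (‖z‖ + ‖x 0 - z‖))) := by
      rw [le_principal_iff]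
      exact Filter.mem_map.mpr (Filter.univ_mem' hmem)
    obtain ⟨c, -, hc⟩ := (isCompact_Icc
      (a := -(‖v‖ * (‖z‖ + ‖x 0 - z‖))) (b := ‖v‖ * (‖z‖ + ‖x 0 - z‖))).ultrafilter_le_nhds
      ((Filter.hyperfilter ℕ : Ultrafilter ℕ).map (fun n => ⟪v, x n⟫)) hle
    exact ⟨c, hc⟩
  choose L hL using hlimex
  have hLuniq : ∀ (v : X) (c : ℝ),
      Tendsto (fun n => ⟪v, x n⟫) ((Filter.hyperfilter ℕ : Ultrafilter ℕ) : Filter ℕ)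
        (nhds c) → L v = c :=
    fun v c hc => tendsto_nhds_unique (hL v) hc
  have hLadd : ∀ v u : X, L (v + u) = L v + L u := by
    intro v u
    apply hLuniq
    exact ((hL v).add (hL u)).congr (fun n => (inner_add_left _ _ _).symm)
  have hLsmul : ∀ (c : ℝ) (v : X), L (c • v) = c * L v := by
    intro c v
    apply hLuniq
    exact ((hL v).const_mul c).congr (fun n => (real_inner_smul_left _ _ _).symm)
  have hLbound : ∀ v : X, ‖L v‖ ≤ (‖z‖ + ‖x 0 - z‖) * ‖v‖ := by
    intro v
    have h1 : ∀ n, |⟪v, x n⟫| ≤ (‖z‖ + ‖x 0 - z‖) * ‖v‖ := by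
      intro n
      calc |⟪v, x n⟫| ≤ ‖v‖ * ‖x n‖ := abs_real_inner_le_norm _ _
      _ ≤ ‖v‖ * (‖z‖ + ‖x 0 - z‖) := mul_le_mul_of_nonneg_left (hxb n) (norm_nonneg v)
      _ = (‖z‖ + ‖x 0 - z‖) * ‖v‖ := mul_comm _ _
    rw [Real.norm_eq_abs]
    exact le_of_tendsto (hL v).abs (Filter.Eventually.of_forall h1)
  obtain ⟨w, hw⟩ : ∃ w : X, ∀ v : X, ⟪v, w⟫ = L v := by
    refine ⟨(InnerProductSpace.toDual ℝ X).symm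
      (LinearMap.mkContinuous
        { toFun := L, map_add' := hLadd, map_smul' := hLsmul }
        (‖z‖ + ‖x 0 - z‖) hLbound), fun v => ?_⟩
    rw [real_inner_comm]
    exact InnerProductSpace.toDual_symm_apply
  -- w belongs to every M li
  have hwM : ∀ li : Fin (k + 1), w ∈ M li := by
    intro li
    rw [← Submodule.orthogonal_orthogonal (M li), Submodule.mem_orthogonal]
    intro v hv
    rw [hw v]
    by_cases h0 : li = 0
    · subst h0
      apply hLuniq
      have hzero : ∀ n, ⟪v, x n⟫ = 0 :=
        fun n => (Submodule.mem_orthogonal' _ _).1 hv _ (hxM0 n)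
      exact tendsto_const_nhds.congr (fun n => (hzero n).symm)
    · apply hLuniq
      have h1 : Tendsto (fun n => ⟪v, x n⟫) atTop (nhds 0) := by
        apply squeeze_zero_norm' ?_ (by simpa using hE0.const_mul ‖v‖)
        filter_upwards [eventually_gt_atTop 0] with n hn
        rw [Real.norm_eq_abs]
        exact hdist li h0 v hv n hn
      exact h1.mono_left hUat
  have hwMi : w ∈ (⨅ l, M l : Submodule ℝ X) := (Submodule.mem_iInf _).mpr hwM
  -- inner products with members of ⨅ M l are eventually constant
  have hconst : ∀ m ∈ (⨅ l, M l : Submodule ℝ X), ∀ n : ℕ, 0 < n → ⟪m, x n⟫ = ⟪m, x 0⟫ := by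
    intro m hm n hn
    obtain ⟨n', rfl⟩ : ∃ n', n = n' + 1 := ⟨n - 1, by omega⟩
    have h1 : x 0 - x (n' + 1) ∈ (⨅ l, M l : Submodule ℝ X)ᗮ := hSMi n' (hx0S n')
    have h2 : ⟪x 0 - x (n' + 1), m⟫ = 0 := (Submodule.mem_orthogonal' _ _).1 h1 m hm
    have h3 : ⟪m, x 0 - x (n' + 1)⟫ = 0 := by rw [real_inner_comm]; exact h2
    rw [inner_sub_right] at h3
    linarith
  have hMiL : ∀ m ∈ (⨅ l, M l : Submodule ℝ X), L m = ⟪m, x 0⟫ := by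
    intro m hm
    apply hLuniq
    have hev : ∀ᶠ n in ((Filter.hyperfilter ℕ : Ultrafilter ℕ) : Filter ℕ), 0 < n :=
      Filter.le_def.mp hUat _ (eventually_gt_atTop 0)
    exact Tendsto.congr' (hev.mono (fun n hn => (hconst m hm n hn).symm)) tendsto_const_nhds
  -- w = z
  have hwz : w = z := by
    have hchar := Submodule.eq_starProjection_of_mem_of_inner_eq_zero
      (K := (⨅ l, M l : Submodule ℝ X)) (u := x 0) hwMi ?_
    · rw [hzdef, ← hchar]; rfl
    · intro u hu
      have h2 : ⟪w, u⟫ = ⟪u, x 0⟫ := by rw [real_inner_comm, hw u, hMiL u hu]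
      rw [inner_sub_left, h2, real_inner_comm]
      ring
  -- ⟪x 0, z⟫ = ‖z‖ ^ 2
  have hzx0 : ⟪x 0, z⟫ = ‖z‖ ^ 2 := by
    have h1 : ⟪x 0 - z, z⟫ = 0 := (Submodule.mem_orthogonal' _ _).1 hx0z z hzM
    rw [inner_sub_left, real_inner_self_eq_norm_sq] at h1
    linarith
  -- d n ^ 2 in terms of ⟪x 0, x n⟫
  have hdsq : ∀ n : ℕ, 0 < n → ‖x n - z‖ ^ 2 = ⟪x 0, x n⟫ - ‖z‖ ^ 2 := by
    intro n hn
    obtain ⟨n', rfl⟩ : ∃ n', n = n' + 1 := ⟨n - 1, by omega⟩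
    have h1 : ⟪x 0 - x (n' + 1), x (n' + 1)⟫ = 0 :=
      hSo n' _ (hx0S n') _ (hxS n')
    rw [inner_sub_left] at h1
    have h2 : ‖x (n' + 1)‖ ^ 2 = ⟪x 0, x (n' + 1)⟫ := by
      rw [← real_inner_self_eq_norm_sq]; linarith
    have h3 : ⟪x (n' + 1), z⟫ = ‖z‖ ^ 2 := by
      rw [real_inner_comm, hconst z hzM (n' + 1) (Nat.succ_pos n'), real_inner_comm, hzx0]
    rw [norm_sub_sq_real, h2, h3]
    ring
  -- limit of d² along the ultrafilter is 0
  have hfin : Tendsto (fun n => ‖x n - z‖ ^ 2)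
      ((Filter.hyperfilter ℕ : Ultrafilter ℕ) : Filter ℕ) (nhds 0) := by
    have hLx0 : L (x 0) = ‖z‖ ^ 2 := by
      rw [← hw (x 0), hwz, hzx0]
    have h1 : Tendsto (fun n => ⟪x 0, x n⟫ - ‖z‖ ^ 2)
        ((Filter.hyperfilter ℕ : Ultrafilter ℕ) : Filter ℕ) (nhds (L (x 0) - ‖z‖ ^ 2)) :=
      (hL (x 0)).sub_const _
    rw [hLx0, sub_self] at h1
    have hev : ∀ᶠ n in ((Filter.hyperfilter ℕ : Ultrafilter ℕ) : Filter ℕ), 0 < n :=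
      Filter.le_def.mp hUat _ (eventually_gt_atTop 0)
    exact Tendsto.congr' (hev.mono (fun n hn => (hdsq n hn).symm)) h1
  -- conclude d → 0
  have hD0 : (⨅ n, ‖x n - z‖) = 0 := by
    have h1 : Tendsto (fun n => ‖x n - z‖ ^ 2) atTop (nhds ((⨅ n, ‖x n - z‖) ^ 2)) :=
      hdlim.pow 2
    have h2 := h1.mono_left hUat
    have h3 := tendsto_nhds_unique h2 hfin
    have hnn : 0 ≤ ⨅ n, ‖x n - z‖ := le_ciInf (fun n => norm_nonneg _)
    nlinarith
  have hfinal : Tendsto (fun n => ‖x n - z‖) atTop (nhds 0) := hD0 ▸ hdlim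
  rw [← hzdef, tendsto_iff_norm_sub_tendsto_zero]
  exact hfinal
end

section
/- Consider Algorithm 1: let M_1,...,M_k be closed linear subspaces of a real Hilbert space X and x_0 ∈ X. For each i ≥ 0 choose l_i ∈ {1,...,k}, set x̃_i := P_{M_{l_i}}(x_i), a_i := x_i − x̃_i, and H_i := {x ∈ X : ⟨a_i, x⟩ = 0}; choose J_i ⊆ {0,1,...,i} with i ∈ J_i, set H̃_i := ⋂_{j∈J_i} H_j, and x_{i+1} := P_{H̃_i}(x̃_i). If for every i the vector x_0 − x_i lies in the linear span of {a_j : j ∈ J_i} (condition (B)), then ⟨x_0 − x_i, x_i⟩ = 0 for all i > 0. -/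
open scoped RealInnerProductSpace

/-- in Algorithm 1 (`x̃_i = P_{M_{l_i}} x_i`, `a_i = x_i - x̃_i`,
`H_i = {x : ⟪a_i, x⟫ = 0}`, `i ∈ J_i ⊆ {0,…,i}`, `H̃_i = ⋂_{j ∈ J_i} H_j`,
`x_{i+1} = P_{H̃_i}(x̃_i)`), if condition (B) holds, i.e. `x_0 - x_i` lies in
the span of `{a_j : j ∈ J_i}` for every `i`, then `⟪x_0 - x_i, x_i⟫ = 0` for
all `i > 0`. -/
theorem algorithm1_condition_B_inner_zero
    {X : Type*} [NormedAddCommGroup X] [InnerProductSpace ℝ X] [CompleteSpace X]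
    {k : ℕ} (M : Fin k → Submodule ℝ X) [∀ l, CompleteSpace (M l)]
    (l : ℕ → Fin k) (x xt a : ℕ → X) (J : ℕ → Finset ℕ)
    (hxt : ∀ i, xt i = ((M (l i)).orthogonalProjectionOnto (x i) : X))
    (ha : ∀ i, a i = x i - xt i)
    (hJ : ∀ i, i ∈ J i ∧ ∀ j ∈ J i, j ≤ i)
    -- `x_{i+1}` is the orthogonal projection of `x̃_i` onto
    -- `H̃_i = ⋂_{j ∈ J_i} {y : ⟪a_j, y⟫ = 0}`:
    (hstep : ∀ i,
      (∀ j ∈ J i, ⟪a j, x (i + 1)⟫ = 0) ∧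
      ∀ y : X, (∀ j ∈ J i, ⟪a j, y⟫ = 0) → ‖xt i - x (i + 1)‖ ≤ ‖xt i - y‖)
    -- condition (B):
    (hB : ∀ i, x 0 - x i ∈ Submodule.span ℝ (a '' (J i : Set ℕ))) :
    ∀ i, 0 < i → ⟪x 0 - x i, x i⟫ = 0 := by
  rintro i hi
  obtain ⟨m, rfl⟩ : ∃ m, i = m + 1 := ⟨i - 1, by omega⟩
  set K : Submodule ℝ X :=
    { carrier := {y | ∀ j ∈ J m, ⟪a j, y⟫ = 0}
      add_mem' := fun hu hv j hj => by
        simp [inner_add_right, hu j hj, hv j hj]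
      zero_mem' := fun j hj => by simp
      smul_mem' := fun c u hu j hj => by
        simp [real_inner_smul_right, hu j hj] } with hKdef
  have hK1 : x (m + 1) ∈ K := (hstep m).1
  have hmin : ∀ y ∈ K, ‖xt m - x (m + 1)‖ ≤ ‖xt m - y‖ := fun y hy => (hstep m).2 y hy
  -- the minimization property gives orthogonality
  have hiInf : ‖xt m - x (m + 1)‖ = ⨅ w : (↑K : Set X), ‖xt m - w‖ := by
    apply le_antisymm
    · exact le_ciInf fun w => hmin w w.2
    · exact ciInf_le ⟨0, fun r ⟨w, hw⟩ => hw ▸ norm_nonneg _⟩ (⟨x (m + 1), hK1⟩ : (↑K : Set X))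
  have horth : ∀ w ∈ K, ⟪xt m - x (m + 1), w⟫ = 0 :=
    (Submodule.norm_eq_iInf_iff_real_inner_eq_zero K hK1).1 hiInf
  have h3 : ⟪xt m - x (m + 1), x (m + 1)⟫ = 0 := horth _ hK1
  -- span part
  have h1 : ⟪x 0 - x m, x (m + 1)⟫ = 0 := by
    refine Submodule.span_induction ?_ ?_ ?_ ?_ (hB m)
    · rintro v ⟨j, hj, rfl⟩
      exact (hstep m).1 j hj
    · simp
    · intro u v _ _ hu hv; simp [inner_add_left, hu, hv]
    · intro c u _ hu; simp [real_inner_smul_left, hu]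
  have h2 : ⟪a m, x (m + 1)⟫ = 0 := (hstep m).1 m (hJ m).1
  have hdecomp : x 0 - x (m + 1) = (x 0 - x m) + a m + (xt m - x (m + 1)) := by
    rw [ha m]; abel
  rw [hdecomp, inner_add_left, inner_add_left, h1, h2, h3]
  ring
end
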